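/- arXiv:2212.08374 — 10 statements merged into one kernel-verified Lean document; each statement's English description precedes it below -/
import Mathlib

section
/- Let u₁ : [0,1] → ℂ be four times continuously differentiable and u₂ : [0,1] → ℂ be three times continuously differentiable with u₁'(0) = u₂'(0) = 0. Set v₁(ρ) = −ρ·u₁'(ρ) − u₁(ρ) + u₂(ρ) and v₂(ρ) = u₁''(ρ) + (4/ρ)·u₁'(ρ) − ρ·u₂'(ρ) − 2·u₂(ρ). Then Re( ∫₀¹ v₁'(ρ)·conj(u₁'(ρ))·ρ⁴ dρ + ∫₀¹ v₂(ρ)·conj(u₂(ρ))·ρ⁴ dρ + v₁(1)·conj(u₁(1)) ) ≤ (1/2)·( ∫₀¹ |u₁'(ρ)|²·ρ⁴ dρ + ∫₀¹ |u₂(ρ)|²·ρ⁴ dρ + |u₁(1)|² ). -/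
open Set MeasureTheory

private lemma re_hasDerivAt {f : ℝ → ℂ} {f' : ℂ} {x : ℝ} (h : HasDerivAt f f' x) :
    HasDerivAt (fun t => (f t).re) f'.re x :=
  Complex.reCLM.hasFDerivAt.comp_hasDerivAt x h

private lemma re_int {f : ℝ → ℂ} (hf : IntervalIntegrable f volume 0 1) :
    (∫ ρ in (0:ℝ)..1, f ρ).re = ∫ ρ in (0:ℝ)..1, (f ρ).re := by
  have := Complex.reCLM.intervalIntegral_comp_comm hf
  simpa using this.symm

/-- For `u₁ ∈ C⁴([0,1],ℂ)`, `u₂ ∈ C³([0,1],ℂ)` with `u₁'(0) = u₂'(0) = 0`,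
setting `v₁ = −ρu₁' − u₁ + u₂` and `v₂ = u₁'' + (4/ρ)u₁' − ρu₂' − 2u₂`, one has
`Re (L̃₀u, u)_{E₁} ≤ (1/2) ‖u‖²_{E₁}`. -/
theorem stmt_1 (u₁ u₂ v₁ v₂ : ℝ → ℂ)
    (hu₁ : ContDiffOn ℝ 4 u₁ (Icc 0 1))
    (hu₂ : ContDiffOn ℝ 3 u₂ (Icc 0 1))
    (hu₁0 : derivWithin u₁ (Icc 0 1) 0 = 0)
    (hu₂0 : derivWithin u₂ (Icc 0 1) 0 = 0)
    (hv₁ : ∀ ρ : ℝ, v₁ ρ = -(ρ : ℂ) * derivWithin u₁ (Icc 0 1) ρ - u₁ ρ + u₂ ρ)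
    (hv₂ : ∀ ρ : ℝ, v₂ ρ = derivWithin (derivWithin u₁ (Icc 0 1)) (Icc 0 1) ρ
        + (4 / (ρ : ℂ)) * derivWithin u₁ (Icc 0 1) ρ - (ρ : ℂ) * derivWithin u₂ (Icc 0 1) ρ
        - 2 * u₂ ρ) :
    ((∫ ρ in (0:ℝ)..1, derivWithin v₁ (Icc 0 1) ρ
        * (starRingEnd ℂ) (derivWithin u₁ (Icc 0 1) ρ) * (ρ : ℂ) ^ 4)
      + (∫ ρ in (0:ℝ)..1, v₂ ρ * (starRingEnd ℂ) (u₂ ρ) * (ρ : ℂ) ^ 4)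
      + v₁ 1 * (starRingEnd ℂ) (u₁ 1)).re
    ≤ (1 / 2) * ((∫ ρ in (0:ℝ)..1, ‖derivWithin u₁ (Icc 0 1) ρ‖ ^ 2 * ρ ^ 4)
      + (∫ ρ in (0:ℝ)..1, ‖u₂ ρ‖ ^ 2 * ρ ^ 4) + ‖u₁ 1‖ ^ 2) := by
  simp only [starRingEnd_apply]
  have hUD : UniqueDiffOn ℝ (Icc (0:ℝ) 1) := uniqueDiffOn_Icc one_pos
  set F := derivWithin u₁ (Icc (0:ℝ) 1) with hFdef
  set F' := derivWithin F (Icc (0:ℝ) 1) with hF'def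
  set G' := derivWithin u₂ (Icc (0:ℝ) 1) with hG'def
  have hF3 : ContDiffOn ℝ 3 F (Icc 0 1) := hu₁.derivWithin hUD (by norm_num)
  have hFcont : ContinuousOn F (Icc 0 1) := hF3.continuousOn
  have hF'2 : ContDiffOn ℝ 2 F' (Icc 0 1) := hF3.derivWithin hUD (by norm_num)
  have hF'cont : ContinuousOn F' (Icc 0 1) := hF'2.continuousOn
  have hGcont : ContinuousOn u₂ (Icc 0 1) := hu₂.continuousOn
  have hG'2 : ContDiffOn ℝ 2 G' (Icc 0 1) := hu₂.derivWithin hUD (by norm_num)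
  have hG'cont : ContinuousOn G' (Icc 0 1) := hG'2.continuousOn
  have hu₁d : ∀ x ∈ Icc (0:ℝ) 1, HasDerivWithinAt u₁ (F x) (Icc 0 1) x :=
    fun x hx => ((hu₁.differentiableOn (by norm_num)) x hx).hasDerivWithinAt
  have hFd : ∀ x ∈ Icc (0:ℝ) 1, HasDerivWithinAt F (F' x) (Icc 0 1) x :=
    fun x hx => ((hF3.differentiableOn (by norm_num)) x hx).hasDerivWithinAt
  have hGd : ∀ x ∈ Icc (0:ℝ) 1, HasDerivWithinAt u₂ (G' x) (Icc 0 1) x :=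
    fun x hx => ((hu₂.differentiableOn (by norm_num)) x hx).hasDerivWithinAt
  have hid : ∀ x : ℝ, HasDerivAt (fun t : ℝ => (t:ℂ)) 1 x := fun x => (hasDerivAt_id x).ofReal_comp
  have hcO : ContinuousOn (fun t : ℝ => (t:ℂ)) (Icc 0 1) := Complex.continuous_ofReal.continuousOn
  -- Step 1: derivWithin v₁
  have hv₁' : ∀ x ∈ Icc (0:ℝ) 1, derivWithin v₁ (Icc 0 1) x = -(x:ℂ) * F' x - 2 * F x + G' x := by
    intro x hx
    have heq : v₁ = fun ρ : ℝ => -((ρ:ℂ) * F ρ) - u₁ ρ + u₂ ρ := by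
      funext ρ; rw [hv₁ ρ]; ring
    have h1 : HasDerivWithinAt v₁ (-((1:ℂ) * F x + (x:ℂ) * F' x) - F x + G' x) (Icc 0 1) x := by
      rw [heq]
      exact ((((hid x).hasDerivWithinAt.mul (hFd x hx)).neg).sub (hu₁d x hx)).add (hGd x hx)
    rw [h1.derivWithin (hUD x hx)]; ring
  -- the smooth versions of the two complex integrands
  set g₁ : ℝ → ℂ := fun ρ => (-(ρ:ℂ) * F' ρ - 2 * F ρ + G' ρ) * star (F ρ) * (ρ:ℂ)^4 with hg₁def
  set g₂ : ℝ → ℂ := fun ρ => (F' ρ - (ρ:ℂ) * G' ρ - 2 * u₂ ρ) * star (u₂ ρ) * (ρ:ℂ)^4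
      + 4 * (ρ:ℂ)^3 * (F ρ * star (u₂ ρ)) with hg₂def
  have hI₁ : (∫ ρ in (0:ℝ)..1, derivWithin v₁ (Icc 0 1) ρ * star (F ρ) * (ρ:ℂ)^4)
      = ∫ ρ in (0:ℝ)..1, g₁ ρ := by
    apply intervalIntegral.integral_congr
    intro ρ hρ
    rw [uIcc_of_le (by norm_num : (0:ℝ) ≤ 1)] at hρ
    show derivWithin v₁ (Icc 0 1) ρ * star (F ρ) * (ρ:ℂ)^4 = g₁ ρ
    rw [hv₁' ρ hρ]
  have hI₂ : (∫ ρ in (0:ℝ)..1, v₂ ρ * star (u₂ ρ) * (ρ:ℂ)^4) = ∫ ρ in (0:ℝ)..1, g₂ ρ := by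
    apply intervalIntegral.integral_congr_ae
    filter_upwards with ρ hρ
    rw [Set.uIoc_of_le (by norm_num : (0:ℝ) ≤ 1)] at hρ
    have hρ0 : (ρ:ℂ) ≠ 0 := by exact_mod_cast ne_of_gt hρ.1
    show v₂ ρ * star (u₂ ρ) * (ρ:ℂ)^4 = g₂ ρ
    rw [hv₂ ρ]
    simp only [hg₂def]
    field_simp
    ring
  -- continuity / integrability
  have hg₁cont : ContinuousOn g₁ (Icc 0 1) := by
    apply ContinuousOn.mul
    apply ContinuousOn.mul
    · exact ((hcO.neg.mul hF'cont).sub (hFcont.const_smul (2:ℂ))).add hG'cont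
    · exact hFcont.star
    · exact hcO.pow 4
  have hg₂cont : ContinuousOn g₂ (Icc 0 1) := by
    apply ContinuousOn.add
    · exact (((hF'cont.sub (hcO.mul hG'cont)).sub (hGcont.const_smul (2:ℂ))).mul hGcont.star).mul
        (hcO.pow 4)
    · exact ((hcO.pow 3).const_smul (4:ℂ)).mul (hFcont.mul hGcont.star)
  -- the potential K and its derivative D
  set K : ℝ → ℂ := fun ρ => (((-(1/2):ℝ)):ℂ) * ((ρ:ℂ)^5 * (F ρ * star (F ρ)))
      - (((1/2):ℝ):ℂ) * ((ρ:ℂ)^5 * (u₂ ρ * star (u₂ ρ)))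
      + (ρ:ℂ)^4 * (F ρ * star (u₂ ρ)) with hKdef
  set D : ℝ → ℂ := fun ρ => (((-(5/2):ℝ)):ℂ) * ((ρ:ℂ)^4 * (F ρ * star (F ρ)))
      - (((1/2):ℝ):ℂ) * ((ρ:ℂ)^5 * (F' ρ * star (F ρ) + F ρ * star (F' ρ)))
      - (((5/2):ℝ):ℂ) * ((ρ:ℂ)^4 * (u₂ ρ * star (u₂ ρ)))
      - (((1/2):ℝ):ℂ) * ((ρ:ℂ)^5 * (G' ρ * star (u₂ ρ) + u₂ ρ * star (G' ρ)))
      + (((4:ℝ)):ℂ) * ((ρ:ℂ)^3 * (F ρ * star (u₂ ρ)))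
      + (ρ:ℂ)^4 * (F' ρ * star (u₂ ρ) + F ρ * star (G' ρ)) with hDdef
  have hKd : ∀ y ∈ Ioo (0:ℝ) 1, HasDerivAt K (D y) y := by
    intro y hy
    have hyI : y ∈ Icc (0:ℝ) 1 := Ioo_subset_Icc_self hy
    have hny : Icc (0:ℝ) 1 ∈ nhds y := Icc_mem_nhds hy.1 hy.2
    have hFy : HasDerivAt F (F' y) y := (hFd y hyI).hasDerivAt hny
    have hGy : HasDerivAt u₂ (G' y) y := (hGd y hyI).hasDerivAt hny
    have hP : ∀ n : ℕ, HasDerivAt (fun t : ℝ => ((t:ℂ))^n) ((n:ℂ) * (y:ℂ)^(n-1)) y := by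
      intro n
      have := (hasDerivAt_pow n y).ofReal_comp
      simpa [Complex.ofReal_pow] using this
    have h1 := ((hP 5).mul (hFy.mul hFy.star)).const_mul ((((-(1/2):ℝ))):ℂ)
    have h2 := ((hP 5).mul (hGy.mul hGy.star)).const_mul ((((1/2):ℝ)):ℂ)
    have h3 := (hP 4).mul (hFy.mul hGy.star)
    have hcomb := (h1.sub h2).add h3
    refine hcomb.congr_deriv ?_
    simp only [hDdef, Pi.mul_apply]
    push_cast
    ring
  have hKcont : ContinuousOn K (Icc 0 1) := by
    apply ContinuousOn.add
    apply ContinuousOn.sub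
    · exact continuousOn_const.mul ((hcO.pow 5).mul (hFcont.mul hFcont.star))
    · exact continuousOn_const.mul ((hcO.pow 5).mul (hGcont.mul hGcont.star))
    · exact (hcO.pow 4).mul (hFcont.mul hGcont.star)
  have hDcont : ContinuousOn D (Icc 0 1) := by
    apply ContinuousOn.add
    apply ContinuousOn.add
    apply ContinuousOn.sub
    apply ContinuousOn.sub
    apply ContinuousOn.sub
    · exact continuousOn_const.mul ((hcO.pow 4).mul (hFcont.mul hFcont.star))
    · exact continuousOn_const.mul ((hcO.pow 5).mul
        ((hF'cont.mul hFcont.star).add (hFcont.mul hF'cont.star)))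
    · exact continuousOn_const.mul ((hcO.pow 4).mul (hGcont.mul hGcont.star))
    · exact continuousOn_const.mul ((hcO.pow 5).mul
        ((hG'cont.mul hGcont.star).add (hGcont.mul hG'cont.star)))
    · exact continuousOn_const.mul ((hcO.pow 3).mul (hFcont.mul hGcont.star))
    · exact (hcO.pow 4).mul ((hF'cont.mul hGcont.star).add (hFcont.mul hG'cont.star))
  set w : ℝ → ℝ := fun ρ => (K ρ).re with hwdef
  have hFTC : (∫ ρ in (0:ℝ)..1, (D ρ).re) = w 1 - w 0 := by
    apply intervalIntegral.integral_eq_sub_of_hasDeriv_right_of_le (by norm_num)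
    · exact Complex.continuous_re.comp_continuousOn hKcont
    · exact fun y hy => (re_hasDerivAt (hKd y hy)).hasDerivWithinAt
    · exact (Complex.continuous_re.comp_continuousOn hDcont).intervalIntegrable_of_Icc (by norm_num)
  -- pointwise identity between D and the integrands
  have hpt : ∀ ρ : ℝ, (D ρ).re = (g₁ ρ).re + (g₂ ρ).re
      - (1/2) * (‖F ρ‖^2 * ρ^4) - (1/2) * (‖u₂ ρ‖^2 * ρ^4) := by
    intro ρ
    simp only [hDdef, hg₁def, hg₂def, RCLike.star_def, ← Complex.ofReal_pow,
      Complex.mul_re, Complex.mul_im, Complex.add_re, Complex.add_im, Complex.sub_re,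
      Complex.sub_im, Complex.neg_re, Complex.neg_im, Complex.ofReal_re, Complex.ofReal_im,
      Complex.conj_re, Complex.conj_im, Complex.sq_norm,
      Complex.normSq_apply, Complex.re_ofNat, Complex.im_ofNat]
    ring
  have ig₁ : IntervalIntegrable g₁ volume 0 1 := hg₁cont.intervalIntegrable_of_Icc (by norm_num)
  have ig₂ : IntervalIntegrable g₂ volume 0 1 := hg₂cont.intervalIntegrable_of_Icc (by norm_num)
  have ig₁r : IntervalIntegrable (fun ρ => (g₁ ρ).re) volume 0 1 :=
    (Complex.continuous_re.comp_continuousOn hg₁cont).intervalIntegrable_of_Icc (by norm_num)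
  have ig₂r : IntervalIntegrable (fun ρ => (g₂ ρ).re) volume 0 1 :=
    (Complex.continuous_re.comp_continuousOn hg₂cont).intervalIntegrable_of_Icc (by norm_num)
  have iA : IntervalIntegrable (fun ρ => ‖F ρ‖^2 * ρ^4) volume 0 1 :=
    ((hFcont.norm.pow 2).mul (continuous_pow 4).continuousOn).intervalIntegrable_of_Icc
      (by norm_num)
  have iB : IntervalIntegrable (fun ρ => ‖u₂ ρ‖^2 * ρ^4) volume 0 1 :=
    ((hGcont.norm.pow 2).mul (continuous_pow 4).continuousOn).intervalIntegrable_of_Icc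
      (by norm_num)
  have e1 : (∫ ρ in (0:ℝ)..1, (D ρ).re) = ∫ ρ in (0:ℝ)..1, ((g₁ ρ).re + (g₂ ρ).re
      - (1/2) * (‖F ρ‖^2 * ρ^4) - (1/2) * (‖u₂ ρ‖^2 * ρ^4)) :=
    intervalIntegral.integral_congr (fun ρ _ => hpt ρ)
  have e2 : (∫ ρ in (0:ℝ)..1, ((g₁ ρ).re + (g₂ ρ).re
        - (1/2) * (‖F ρ‖^2 * ρ^4) - (1/2) * (‖u₂ ρ‖^2 * ρ^4)))
      = (∫ ρ in (0:ℝ)..1, (g₁ ρ).re) + (∫ ρ in (0:ℝ)..1, (g₂ ρ).re)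
        - (1/2) * (∫ ρ in (0:ℝ)..1, ‖F ρ‖^2 * ρ^4)
        - (1/2) * (∫ ρ in (0:ℝ)..1, ‖u₂ ρ‖^2 * ρ^4) := by
    rw [intervalIntegral.integral_sub ((ig₁r.add ig₂r).sub (iA.const_mul (1/2)))
        (iB.const_mul (1/2)),
      intervalIntegral.integral_sub (ig₁r.add ig₂r) (iA.const_mul (1/2)),
      intervalIntegral.integral_add ig₁r ig₂r,
      intervalIntegral.integral_const_mul, intervalIntegral.integral_const_mul]
  have hK0 : w 0 = 0 := by
    simp [hwdef, hKdef]
  have hbdry : w 1 + (v₁ 1 * star (u₁ 1)).re ≤ (1/2) * ‖u₁ 1‖^2 := by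
    simp only [hwdef, hKdef, hv₁ 1]
    simp only [RCLike.star_def, ← Complex.ofReal_pow, Complex.ofReal_one, one_pow,
      Complex.mul_re, Complex.mul_im, Complex.add_re, Complex.add_im, Complex.sub_re,
      Complex.sub_im, Complex.neg_re, Complex.neg_im, Complex.ofReal_re, Complex.ofReal_im,
      Complex.conj_re, Complex.conj_im, Complex.sq_norm,
      Complex.normSq_apply, Complex.re_ofNat, Complex.im_ofNat, Complex.one_re, Complex.one_im, one_mul, mul_one]
    nlinarith [sq_nonneg ((u₂ 1).re - (F 1).re - (u₁ 1).re),
      sq_nonneg ((u₂ 1).im - (F 1).im - (u₁ 1).im),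
      sq_nonneg (u₁ 1).re, sq_nonneg (u₁ 1).im]
  rw [hI₁, hI₂, Complex.add_re, Complex.add_re, re_int ig₁, re_int ig₂]
  have key : (∫ ρ in (0:ℝ)..1, (g₁ ρ).re) + (∫ ρ in (0:ℝ)..1, (g₂ ρ).re)
      = w 1 + (1/2) * (∫ ρ in (0:ℝ)..1, ‖F ρ‖^2 * ρ^4)
        + (1/2) * (∫ ρ in (0:ℝ)..1, ‖u₂ ρ‖^2 * ρ^4) := by
    have := hFTC
    rw [e1, e2] at this
    rw [hK0] at this
    linarith
  linarith [hbdry, key]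
end

section
/- For all ρ ∈ (0,1) the functions ψ₀(ρ) = (arctanh ρ − ρ)/ρ³ and ψ₁(ρ) = ρ⁻³ each satisfy the ODE (ρ² − 1)·u''(ρ) + (6ρ − 4/ρ)·u'(ρ) + 6·u(ρ) = 0, and their Wronskian satisfies ψ₀(ρ)·ψ₁'(ρ) − ψ₀'(ρ)·ψ₁(ρ) = −1/(ρ⁴·(1 − ρ²)) for all ρ ∈ (0,1). -/
open Set

noncomputable def arctanh (x : ℝ) : ℝ := (1 / 2) * Real.log ((1 + x) / (1 - x))

lemma hasDerivAt_arctanh {x : ℝ} (hx : x ∈ Ioo (-1:ℝ) 1) :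
    HasDerivAt arctanh (1 / (1 - x ^ 2)) x := by
  obtain ⟨h1, h2⟩ := hx
  have p1 : (0:ℝ) < 1 + x := by linarith
  have p2 : (0:ℝ) < 1 - x := by linarith
  have hl1 : HasDerivAt (fun y : ℝ => Real.log (1 + y)) (1 / (1 + x)) x := by
    have h : HasDerivAt (fun y : ℝ => 1 + y) 1 x := by
      simpa using (hasDerivAt_id x).const_add 1
    simpa using h.log p1.ne'
  have hl2 : HasDerivAt (fun y : ℝ => Real.log (1 - y)) (-1 / (1 - x)) x := by
    have h : HasDerivAt (fun y : ℝ => 1 - y) (-1) x := by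
      simpa using (hasDerivAt_id x).const_sub 1
    simpa using h.log p2.ne'
  have hg : HasDerivAt (fun y : ℝ => (1/2) * (Real.log (1+y) - Real.log (1-y)))
      (1 / (1 - x ^ 2)) x := by
    have h12 : (1:ℝ) - x ^ 2 ≠ 0 := by nlinarith
    have := (hl1.sub hl2).const_mul (1/2 : ℝ)
    refine this.congr_deriv ?_
    field_simp
    ring
  apply hg.congr_of_eventuallyEq
  filter_upwards [Ioo_mem_nhds h1 h2] with y hy
  have q1 : (0:ℝ) < 1 + y := by linarith [hy.1]
  have q2 : (0:ℝ) < 1 - y := by linarith [hy.2]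
  unfold arctanh
  rw [Real.log_div q1.ne' q2.ne']

noncomputable def g0 (ρ : ℝ) : ℝ := (ρ / (1 - ρ ^ 2) + 2 * ρ - 3 * arctanh ρ) / ρ ^ 4

noncomputable def D0 (x : ℝ) : ℝ :=
  (((1 + x ^ 2) / (1 - x ^ 2) ^ 2 + 2 - 3 / (1 - x ^ 2)) * x ^ 4
    - (x / (1 - x ^ 2) + 2 * x - 3 * arctanh x) * (4 * x ^ 3)) / (x ^ 4) ^ 2

lemma hasDerivAt_psi0 {x : ℝ} (hx : x ∈ Ioo (0:ℝ) 1) :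
    HasDerivAt (fun ρ => (arctanh ρ - ρ) / ρ ^ 3) (g0 x) x := by
  have hx' : x ∈ Ioo (-1:ℝ) 1 := ⟨by linarith [hx.1], hx.2⟩
  have hx0 : x ≠ 0 := ne_of_gt hx.1
  have h12 : (1:ℝ) - x ^ 2 ≠ 0 := by nlinarith [hx.1, hx.2]
  have hn : HasDerivAt (fun ρ => arctanh ρ - ρ) (1 / (1 - x ^ 2) - 1) x :=
    (hasDerivAt_arctanh hx').sub (hasDerivAt_id x)
  have hd : HasDerivAt (fun ρ : ℝ => ρ ^ 3) (3 * x ^ 2) x := by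
    simpa using hasDerivAt_pow 3 x
  have := hn.div hd (pow_ne_zero 3 hx0)
  refine this.congr_deriv ?_
  unfold g0
  field_simp
  ring

lemma hasDerivAt_g0 {x : ℝ} (hx : x ∈ Ioo (0:ℝ) 1) : HasDerivAt g0 (D0 x) x := by
  have hx' : x ∈ Ioo (-1:ℝ) 1 := ⟨by linarith [hx.1], hx.2⟩
  have hx0 : x ≠ 0 := ne_of_gt hx.1
  have h12 : (1:ℝ) - x ^ 2 ≠ 0 := by nlinarith [hx.1, hx.2]
  have hfrac : HasDerivAt (fun ρ : ℝ => ρ / (1 - ρ ^ 2)) ((1 + x ^ 2) / (1 - x ^ 2) ^ 2) x := by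
    have hden : HasDerivAt (fun ρ : ℝ => 1 - ρ ^ 2) (-(2 * x)) x := by
      simpa using (hasDerivAt_pow 2 x).const_sub 1
    have := (hasDerivAt_id x).div hden h12
    refine this.congr_deriv ?_
    field_simp
    simp only [id]
    ring
  have hn : HasDerivAt (fun ρ : ℝ => ρ / (1 - ρ ^ 2) + 2 * ρ - 3 * arctanh ρ)
      ((1 + x ^ 2) / (1 - x ^ 2) ^ 2 + 2 - 3 / (1 - x ^ 2)) x := by
    have h2 : HasDerivAt (fun ρ : ℝ => 2 * ρ) 2 x := by
      simpa using (hasDerivAt_id x).const_mul 2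
    have h3 : HasDerivAt (fun ρ : ℝ => 3 * arctanh ρ) (3 * (1 / (1 - x ^ 2))) x :=
      (hasDerivAt_arctanh hx').const_mul 3
    have := (hfrac.add h2).sub h3
    refine this.congr_deriv ?_
    ring
  have hd : HasDerivAt (fun ρ : ℝ => ρ ^ 4) (4 * x ^ 3) x := by
    simpa using hasDerivAt_pow 4 x
  have := hn.div hd (pow_ne_zero 4 hx0)
  exact this

lemma hasDerivAt_psi1 {x : ℝ} (hx0 : x ≠ 0) :
    HasDerivAt (fun ρ : ℝ => (ρ ^ 3)⁻¹) (-3 / x ^ 4) x := by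
  have := (hasDerivAt_pow 3 x).inv (pow_ne_zero 3 hx0)
  refine this.congr_deriv ?_
  field_simp
  ring

lemma hasDerivAt_g1 {x : ℝ} (hx0 : x ≠ 0) :
    HasDerivAt (fun ρ : ℝ => -3 / ρ ^ 4) (12 / x ^ 5) x := by
  have h : HasDerivAt (fun ρ : ℝ => (ρ ^ 4)⁻¹) (-(4 * x ^ 3) / (x ^ 4) ^ 2) x :=
    (hasDerivAt_pow 4 x).inv (pow_ne_zero 4 hx0)
  have h2 : (fun ρ : ℝ => -3 / ρ ^ 4) = fun ρ : ℝ => -3 * (ρ ^ 4)⁻¹ := by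
    funext ρ; ring
  rw [h2]
  have := h.const_mul (-3 : ℝ)
  refine this.congr_deriv ?_
  field_simp
  ring

/-- On `(0,1)` the functions `ψ₀(ρ) = (arctanh ρ − ρ)/ρ³` and
`ψ₁(ρ) = ρ⁻³` both solve `(ρ² − 1)u'' + (6ρ − 4/ρ)u' + 6u = 0`, with Wronskian
`ψ₀ψ₁' − ψ₀'ψ₁ = −1/(ρ⁴(1 − ρ²))`. -/
theorem stmt_4 (ψ₀ ψ₁ : ℝ → ℝ)
    (hψ₀ : ∀ ρ : ℝ, ψ₀ ρ = (arctanh ρ - ρ) / ρ ^ 3)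
    (hψ₁ : ∀ ρ : ℝ, ψ₁ ρ = (ρ ^ 3)⁻¹) :
    ∀ ρ ∈ Ioo (0:ℝ) 1,
      ((ρ ^ 2 - 1) * deriv (deriv ψ₀) ρ + (6 * ρ - 4 / ρ) * deriv ψ₀ ρ + 6 * ψ₀ ρ = 0) ∧
      ((ρ ^ 2 - 1) * deriv (deriv ψ₁) ρ + (6 * ρ - 4 / ρ) * deriv ψ₁ ρ + 6 * ψ₁ ρ = 0) ∧
      ψ₀ ρ * deriv ψ₁ ρ - deriv ψ₀ ρ * ψ₁ ρ = -1 / (ρ ^ 4 * (1 - ρ ^ 2)) := by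
  have heq0 : ψ₀ = fun ρ => (arctanh ρ - ρ) / ρ ^ 3 := funext hψ₀
  have heq1 : ψ₁ = fun ρ => (ρ ^ 3)⁻¹ := funext hψ₁
  subst heq0 heq1
  intro ρ hρ
  have hρ0 : ρ ≠ 0 := ne_of_gt hρ.1
  have h12 : (1:ℝ) - ρ ^ 2 ≠ 0 := by nlinarith [hρ.1, hρ.2]
  have hopen : Ioo (0:ℝ) 1 ∈ nhds ρ := Ioo_mem_nhds hρ.1 hρ.2
  have hd0 : ∀ y ∈ Ioo (0:ℝ) 1, deriv (fun ρ => (arctanh ρ - ρ) / ρ ^ 3) y = g0 y :=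
    fun y hy => (hasDerivAt_psi0 hy).deriv
  have hdd0 : deriv (deriv (fun ρ => (arctanh ρ - ρ) / ρ ^ 3)) ρ = D0 ρ := by
    have hev : deriv (fun ρ => (arctanh ρ - ρ) / ρ ^ 3) =ᶠ[nhds ρ] g0 := by
      filter_upwards [hopen] with y hy using hd0 y hy
    rw [hev.deriv_eq, (hasDerivAt_g0 hρ).deriv]
  have hd1 : ∀ y ∈ Ioo (0:ℝ) 1, deriv (fun ρ : ℝ => (ρ ^ 3)⁻¹) y = -3 / y ^ 4 :=
    fun y hy => (hasDerivAt_psi1 (ne_of_gt hy.1)).deriv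
  have hdd1 : deriv (deriv (fun ρ : ℝ => (ρ ^ 3)⁻¹)) ρ = 12 / ρ ^ 5 := by
    have hev : deriv (fun ρ : ℝ => (ρ ^ 3)⁻¹) =ᶠ[nhds ρ] fun y => -3 / y ^ 4 := by
      filter_upwards [hopen] with y hy using hd1 y hy
    rw [hev.deriv_eq, (hasDerivAt_g1 hρ0).deriv]
  rw [hdd0, hd0 ρ hρ, hdd1, hd1 ρ hρ]
  refine ⟨?_, ?_, ?_⟩
  · simp only [g0, D0]
    field_simp
    ring
  · field_simp
    ring
  · simp only [g0]
    field_simp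
    ring
end

section
/- The function g̃₁(ρ) = (12ρ³·arctanh ρ − 9ρ² − 1)/(ρ³·(ρ² + 1)) satisfies (ρ² − 1)·g̃₁''(ρ) + (6ρ − 4/ρ)·g̃₁'(ρ) + 6·g̃₁(ρ) − (16/(1 + ρ²)²)·g̃₁(ρ) = 0 for all ρ ∈ (0,1), and with g₁(ρ) = 1/(1 + ρ²) the Wronskian satisfies g₁(ρ)·g̃₁'(ρ) − g₁'(ρ)·g̃₁(ρ) = 3/(ρ⁴·(1 − ρ²)) for all ρ ∈ (0,1). -/
open Set

noncomputable def myA (x : ℝ) : ℝ := (1 / 2) * (Real.log (1 + x) - Real.log (1 - x))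

lemma arctanh_eq_myA {x : ℝ} (h0 : -1 < x) (h1 : x < 1) : arctanh x = myA x := by
  unfold arctanh myA
  rw [Real.log_div (by linarith) (by linarith)]

lemma hasDerivAt_myA {x : ℝ} (h0 : -1 < x) (h1 : x < 1) :
    HasDerivAt myA (1 / (1 - x ^ 2)) x := by
  have hp : (0:ℝ) < 1 + x := by linarith
  have hm : (0:ℝ) < 1 - x := by linarith
  have d1 : HasDerivAt (fun y : ℝ => Real.log (1 + y)) (1 / (1 + x)) x := by
    have := ((hasDerivAt_id x).const_add 1).log hp.ne'
    simpa using this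
  have d2 : HasDerivAt (fun y : ℝ => Real.log (1 - y)) (-1 / (1 - x)) x := by
    have h : HasDerivAt (fun y : ℝ => 1 - y) (-1) x := by
      simpa using ((hasDerivAt_id x).const_sub 1)
    have := h.log hm.ne'
    simpa using this
  have := ((d1.sub d2).const_mul ((1:ℝ)/2))
  refine this.congr_deriv ?_
  have h2 : 1 - x ^ 2 ≠ 0 := by nlinarith
  field_simp
  ring

noncomputable def gt (x : ℝ) : ℝ :=
  (12 * x ^ 3 * myA x - 9 * x ^ 2 - 1) / (x ^ 3 * (x ^ 2 + 1))

/-- first derivative of gt -/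
noncomputable def Fd (x : ℝ) : ℝ :=
  12 / (1 - x ^ 4) - 24 * x * myA x / (x ^ 2 + 1) ^ 2 + 8 * (1 - x ^ 2) / (x ^ 2 + 1) ^ 2
    + 8 / x ^ 2 + 3 / x ^ 4

/-- second derivative of gt -/
noncomputable def Gd (x : ℝ) : ℝ :=
  48 * x ^ 3 / (1 - x ^ 4) ^ 2 - 24 * myA x * (1 - 3 * x ^ 2) / (x ^ 2 + 1) ^ 3
    - 24 * x / ((1 - x ^ 2) * (x ^ 2 + 1) ^ 2) - 16 * x * (3 - x ^ 2) / (x ^ 2 + 1) ^ 3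
    - 16 / x ^ 3 - 12 / x ^ 5

lemma nz1 {x : ℝ} (h0 : 0 < x) (h1 : x < 1) : x ≠ 0 := h0.ne'
lemma nz2 {x : ℝ} (h0 : 0 < x) (h1 : x < 1) : 1 - x ^ 2 ≠ 0 := by nlinarith
lemma nz3 (x : ℝ) : x ^ 2 + 1 ≠ 0 := by positivity
lemma nz4 {x : ℝ} (h0 : 0 < x) (h1 : x < 1) : 1 - x ^ 4 ≠ 0 := by
  have h2 : x ^ 2 < 1 := by nlinarith
  nlinarith [mul_pos (by nlinarith : (0:ℝ) < 1 - x ^ 2) (by positivity : (0:ℝ) < 1 + x ^ 2)]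

lemma hasDerivAt_gt {x : ℝ} (h0 : 0 < x) (h1 : x < 1) : HasDerivAt gt (Fd x) x := by
  have hA := hasDerivAt_myA (by linarith : -1 < x) h1
  have hden : x ^ 3 * (x ^ 2 + 1) ≠ 0 := by positivity
  have hnum : HasDerivAt (fun y : ℝ => 12 * y ^ 3 * myA y - 9 * y ^ 2 - 1)
      ((36 * x ^ 2) * myA x + (12 * x ^ 3) * (1 / (1 - x ^ 2)) - 18 * x) x := by
    have hp : HasDerivAt (fun y : ℝ => 12 * y ^ 3) (36 * x ^ 2) x := by
      have := (hasDerivAt_pow 3 x).const_mul (12:ℝ)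
      refine this.congr_deriv ?_; push_cast; ring
    have hq : HasDerivAt (fun y : ℝ => 9 * y ^ 2) (18 * x) x := by
      have := (hasDerivAt_pow 2 x).const_mul (9:ℝ)
      refine this.congr_deriv ?_; push_cast; ring
    simpa using ((hp.mul hA).sub hq).sub_const 1
  have hden' : HasDerivAt (fun y : ℝ => y ^ 3 * (y ^ 2 + 1))
      ((3 * x ^ 2) * (x ^ 2 + 1) + x ^ 3 * (2 * x)) x := by
    have := (hasDerivAt_pow 3 x).mul ((hasDerivAt_pow 2 x).add_const 1)
    refine this.congr_deriv ?_; push_cast; ring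
  have := hnum.div hden' hden
  refine this.congr_deriv ?_
  unfold Fd
  have h2 := nz2 h0 h1
  have h3 := nz3 x
  have h4 := nz4 h0 h1
  field_simp
  ring

lemma hasDerivAt_Fd {x : ℝ} (h0 : 0 < x) (h1 : x < 1) : HasDerivAt Fd (Gd x) x := by
  have hA := hasDerivAt_myA (by linarith : -1 < x) h1
  have h2 := nz2 h0 h1
  have h3 := nz3 x
  have h4 := nz4 h0 h1
  have hx := nz1 h0 h1
  have t1 : HasDerivAt (fun y : ℝ => 12 / (1 - y ^ 4)) (12 * (4 * x ^ 3) / (1 - x ^ 4) ^ 2) x := by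
    have hd : HasDerivAt (fun y : ℝ => 1 - y ^ 4) (-(4 * x ^ 3)) x := by
      simpa using (hasDerivAt_pow 4 x).const_sub 1
    have := (hasDerivAt_const x (12:ℝ)).div hd h4
    refine this.congr_deriv ?_
    field_simp
    ring
  have t2 : HasDerivAt (fun y : ℝ => 24 * y * myA y / (y ^ 2 + 1) ^ 2)
      (((24 * myA x + 24 * x * (1 / (1 - x ^ 2))) * (x ^ 2 + 1) ^ 2
        - 24 * x * myA x * (2 * (x ^ 2 + 1) * (2 * x))) / ((x ^ 2 + 1) ^ 2) ^ 2) x := by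
    have hn : HasDerivAt (fun y : ℝ => 24 * y * myA y)
        (24 * myA x + 24 * x * (1 / (1 - x ^ 2))) x := by
      have hl : HasDerivAt (fun y : ℝ => 24 * y) 24 x := by
        simpa using (hasDerivAt_id x).const_mul (24:ℝ)
      have := hl.mul hA
      refine this.congr_deriv ?_; ring
    have hd : HasDerivAt (fun y : ℝ => (y ^ 2 + 1) ^ 2) (2 * (x ^ 2 + 1) * (2 * x)) x := by
      have hb : HasDerivAt (fun y : ℝ => y ^ 2 + 1) (2 * x) x := by
        simpa using (hasDerivAt_pow 2 x).add_const 1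
      have := (hasDerivAt_pow 2 (x ^ 2 + 1)).comp x hb
      refine this.congr_deriv ?_; push_cast; ring
    exact hn.div hd (by positivity)
  have t3 : HasDerivAt (fun y : ℝ => 8 * (1 - y ^ 2) / (y ^ 2 + 1) ^ 2)
      (((8 * (-(2 * x))) * (x ^ 2 + 1) ^ 2
        - 8 * (1 - x ^ 2) * (2 * (x ^ 2 + 1) * (2 * x))) / ((x ^ 2 + 1) ^ 2) ^ 2) x := by
    have hn : HasDerivAt (fun y : ℝ => 8 * (1 - y ^ 2)) (8 * (-(2 * x))) x := by
      have : HasDerivAt (fun y : ℝ => 1 - y ^ 2) (-(2 * x)) x := by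
        simpa using (hasDerivAt_pow 2 x).const_sub 1
      exact this.const_mul 8
    have hd : HasDerivAt (fun y : ℝ => (y ^ 2 + 1) ^ 2) (2 * (x ^ 2 + 1) * (2 * x)) x := by
      have hb : HasDerivAt (fun y : ℝ => y ^ 2 + 1) (2 * x) x := by
        simpa using (hasDerivAt_pow 2 x).add_const 1
      have := (hasDerivAt_pow 2 (x ^ 2 + 1)).comp x hb
      refine this.congr_deriv ?_; push_cast; ring
    exact hn.div hd (by positivity)
  have t4 : HasDerivAt (fun y : ℝ => 8 / y ^ 2) (-(8 * (2 * x)) / (x ^ 2) ^ 2) x := by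
    have := (hasDerivAt_const x (8:ℝ)).div (hasDerivAt_pow 2 x) (by positivity)
    refine this.congr_deriv ?_
    push_cast; ring
  have t5 : HasDerivAt (fun y : ℝ => 3 / y ^ 4) (-(3 * (4 * x ^ 3)) / (x ^ 4) ^ 2) x := by
    have := (hasDerivAt_const x (3:ℝ)).div (hasDerivAt_pow 4 x) (by positivity)
    refine this.congr_deriv ?_
    push_cast; ring
  have := ((((t1.sub t2).add t3).add t4).add t5)
  refine this.congr_deriv ?_
  unfold Gd
  field_simp
  ring

/-- The function `g̃₁(ρ) = (12ρ³ arctanh ρ − 9ρ² − 1)/(ρ³(ρ² + 1))` solves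
`(ρ² − 1)u'' + (6ρ − 4/ρ)u' + 6u − (16/(1 + ρ²)²)u = 0` on `(0,1)`, and with
`g₁(ρ) = 1/(1 + ρ²)` the Wronskian satisfies `g₁g̃₁' − g₁'g̃₁ = 3/(ρ⁴(1 − ρ²))`. -/
theorem stmt_6 (g₁ gt₁ : ℝ → ℝ)
    (hg₁ : ∀ ρ : ℝ, g₁ ρ = 1 / (1 + ρ ^ 2))
    (hgt₁ : ∀ ρ : ℝ, gt₁ ρ = (12 * ρ ^ 3 * arctanh ρ - 9 * ρ ^ 2 - 1) / (ρ ^ 3 * (ρ ^ 2 + 1))) :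
    ∀ ρ ∈ Ioo (0:ℝ) 1,
      ((ρ ^ 2 - 1) * deriv (deriv gt₁) ρ + (6 * ρ - 4 / ρ) * deriv gt₁ ρ + 6 * gt₁ ρ
        - 16 / (1 + ρ ^ 2) ^ 2 * gt₁ ρ = 0) ∧
      g₁ ρ * deriv gt₁ ρ - deriv g₁ ρ * gt₁ ρ = 3 / (ρ ^ 4 * (1 - ρ ^ 2)) := by
  intro ρ hρ
  obtain ⟨h0, h1⟩ := hρ
  have hopen : Ioo (0:ℝ) 1 ∈ nhds ρ := isOpen_Ioo.mem_nhds ⟨h0, h1⟩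
  have hgt_eq : ∀ x ∈ Ioo (0:ℝ) 1, gt₁ x = gt x := by
    intro x hx
    rw [hgt₁, gt, arctanh_eq_myA (by linarith [hx.1]) hx.2]
  have hev : gt₁ =ᶠ[nhds ρ] gt := Filter.eventuallyEq_of_mem hopen hgt_eq
  have hd1 : ∀ x ∈ Ioo (0:ℝ) 1, deriv gt₁ x = Fd x := by
    intro x hx
    have hev' : gt₁ =ᶠ[nhds x] gt :=
      Filter.eventuallyEq_of_mem (isOpen_Ioo.mem_nhds hx) hgt_eq
    rw [hev'.deriv_eq, (hasDerivAt_gt hx.1 hx.2).deriv]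
  have hev2 : deriv gt₁ =ᶠ[nhds ρ] Fd := Filter.eventuallyEq_of_mem hopen hd1
  have hd2 : deriv (deriv gt₁) ρ = Gd ρ := by
    rw [hev2.deriv_eq, (hasDerivAt_Fd h0 h1).deriv]
  have hdg1 : deriv g₁ ρ = -(2 * ρ) / (1 + ρ ^ 2) ^ 2 := by
    have hfun : g₁ = fun x : ℝ => 1 / (1 + x ^ 2) := funext hg₁
    rw [hfun]
    have hb : HasDerivAt (fun y : ℝ => 1 + y ^ 2) (2 * ρ) ρ := by
      simpa using (hasDerivAt_pow 2 ρ).const_add 1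
    have := (hasDerivAt_const ρ (1:ℝ)).div hb (by positivity)
    rw [HasDerivAt.deriv (f := fun x : ℝ => 1 / (1 + x ^ 2)) this]
    field_simp
    ring
  have h2 := nz2 h0 h1
  have h3 := nz3 ρ
  have h4 := nz4 h0 h1
  have hx := h0.ne'
  have h5 : (1:ℝ) + ρ ^ 2 ≠ 0 := by positivity
  rw [hd1 ρ ⟨h0, h1⟩, hd2, hdg1, hg₁, hgt₁, arctanh_eq_myA (by linarith) h1]
  unfold Fd Gd
  constructor
  · field_simp
    ring
  · field_simp
    ring
end

section
/- There exists a constant C > 0 such that for every twice continuously differentiable function f : [0,1] → ℂ one has ∫₀¹ |f'(ρ)|²·ρ² dρ ≤ C·∫₀¹ (|f(ρ)|² + |f'(ρ)|² + |f''(ρ)|²)·ρ⁴ dρ. -/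
open Set MeasureTheory

/-- Hardy inequality for the derivative: there is `C > 0` such that for every
`f ∈ C²([0,1],ℂ)` one has `∫₀¹ |f'|²ρ² dρ ≤ C ∫₀¹ (|f|² + |f'|² + |f''|²)ρ⁴ dρ`. -/
theorem stmt_8 : ∃ C : ℝ, 0 < C ∧ ∀ f : ℝ → ℂ, ContDiffOn ℝ 2 f (Icc 0 1) →
    (∫ ρ in (0:ℝ)..1, ‖derivWithin f (Icc 0 1) ρ‖ ^ 2 * ρ ^ 2)
      ≤ C * ∫ ρ in (0:ℝ)..1, (‖f ρ‖ ^ 2 + ‖derivWithin f (Icc 0 1) ρ‖ ^ 2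
          + ‖derivWithin (derivWithin f (Icc 0 1)) (Icc 0 1) ρ‖ ^ 2) * ρ ^ 4 := by
  refine ⟨6, by norm_num, ?_⟩
  intro f hf
  set s : Set ℝ := Icc 0 1 with hs_def
  set g : ℝ → ℂ := derivWithin f s with hg_def
  set G : ℝ → ℂ := derivWithin g s with hG_def
  have hs : UniqueDiffOn ℝ s := uniqueDiffOn_Icc one_pos
  have hg1 : ContDiffOn ℝ 1 g s := hf.derivWithin hs (by norm_num)
  have hgc : ContinuousOn g s := hg1.continuousOn
  have hGc : ContinuousOn G s := hg1.continuousOn_derivWithin hs le_rfl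
  have hfc : ContinuousOn f s := hf.continuousOn
  have hgd : ∀ ρ ∈ s, HasDerivWithinAt g (G ρ) s ρ := fun ρ hρ =>
    ((hg1.differentiableOn one_ne_zero) ρ hρ).hasDerivWithinAt
  -- real quantities
  set u : ℝ → ℝ := fun ρ => (g ρ).re ^ 2 + (g ρ).im ^ 2 with hu_def
  set v : ℝ → ℝ := fun ρ => ‖G ρ‖ ^ 2 with hv_def
  set w : ℝ → ℝ := fun ρ => ‖f ρ‖ ^ 2 with hw_def
  set d : ℝ → ℝ := fun ρ => 2 * ((g ρ).re * (G ρ).re + (g ρ).im * (G ρ).im) with hd_def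
  have hnorm : ∀ z : ℂ, ‖z‖ ^ 2 = z.re ^ 2 + z.im ^ 2 := fun z => by
    rw [Complex.sq_norm, Complex.normSq_apply]; ring
  have hu_eq : ∀ ρ, ‖g ρ‖ ^ 2 = u ρ := fun ρ => hnorm (g ρ)
  have hu_nonneg : ∀ ρ, 0 ≤ u ρ := fun ρ => by positivity
  have hv_nonneg : ∀ ρ, 0 ≤ v ρ := fun ρ => by positivity
  have hw_nonneg : ∀ ρ, 0 ≤ w ρ := fun ρ => by positivity
  -- continuity of the real quantities
  have hre : ContinuousOn (fun ρ => (g ρ).re) s := Complex.continuous_re.comp_continuousOn hgc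
  have him : ContinuousOn (fun ρ => (g ρ).im) s := Complex.continuous_im.comp_continuousOn hgc
  have hGre : ContinuousOn (fun ρ => (G ρ).re) s := Complex.continuous_re.comp_continuousOn hGc
  have hGim : ContinuousOn (fun ρ => (G ρ).im) s := Complex.continuous_im.comp_continuousOn hGc
  have huc : ContinuousOn u s := (hre.pow 2).add (him.pow 2)
  have hvc : ContinuousOn v s := (hGc.norm.pow 2)
  have hwc : ContinuousOn w s := (hfc.norm.pow 2)
  have hdc : ContinuousOn d s :=
    continuousOn_const.mul ((hre.mul hGre).add (him.mul hGim))
  -- integrability helper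
  have hInt : ∀ (F : ℝ → ℝ), ContinuousOn F s → ∀ a b : ℝ, a ∈ s → b ∈ s →
      IntervalIntegrable F volume a b := by
    intro F hF a b ha hb
    exact (hF.mono (uIcc_subset_Icc ha hb)).intervalIntegrable
  have h0 : (0:ℝ) ∈ s := by simp [hs_def]
  have h1 : (1:ℝ) ∈ s := by simp [hs_def]
  have hhalf : (1/2:ℝ) ∈ s := by constructor <;> norm_num
  -- derivative of u within s
  have hud : ∀ ρ ∈ s, HasDerivWithinAt u (d ρ) s ρ := by
    intro ρ hρ
    have hre' : HasDerivWithinAt (fun y => (g y).re) ((G ρ).re) s ρ :=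
      Complex.reCLM.hasFDerivAt.comp_hasDerivWithinAt ρ (hgd ρ hρ)
    have him' : HasDerivWithinAt (fun y => (g y).im) ((G ρ).im) s ρ :=
      Complex.imCLM.hasFDerivAt.comp_hasDerivWithinAt ρ (hgd ρ hρ)
    have h := (hre'.fun_pow 2).fun_add (him'.fun_pow 2)
    refine h.congr_deriv ?_
    simp [hd_def]; ring
  -- FTC identity
  have key : ∀ t ∈ Icc (1/2:ℝ) 1,
      (∫ ρ in (0:ℝ)..t, (3 * ρ ^ 2 * u ρ + ρ ^ 3 * d ρ)) = t ^ 3 * u t := by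
    intro t ht
    have hts : t ∈ s := ⟨by linarith [ht.1], ht.2⟩
    have hsub : Icc (0:ℝ) t ⊆ s := Icc_subset_Icc le_rfl ht.2
    have h01 : (0:ℝ) ≤ t := by linarith [ht.1]
    have heq := intervalIntegral.integral_eq_sub_of_hasDeriv_right_of_le h01
      (f := fun ρ => ρ ^ 3 * u ρ) (f' := fun ρ => 3 * ρ ^ 2 * u ρ + ρ ^ 3 * d ρ)
      ?_ ?_ ?_
    · rw [heq]; ring
    · exact (((continuous_pow 3).continuousOn).mul (huc.mono hsub))
    · intro x hx
      have hxs : x ∈ s := hsub (Ioo_subset_Icc_self hx)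
      have hmem : s ∈ nhds x := Icc_mem_nhds hx.1 (by linarith [hx.2, ht.2])
      have hphi : HasDerivWithinAt (fun ρ => ρ ^ 3 * u ρ)
          (3 * x ^ 2 * u x + x ^ 3 * d x) s x := by
        have h := ((hasDerivWithinAt_id x s).fun_pow 3).fun_mul (hud x hxs)
        refine h.congr_deriv ?_
        simp; try ring
      exact ((hphi.hasDerivAt hmem).hasDerivWithinAt)
    · refine ((((continuousOn_const.mul ((continuous_pow 2).continuousOn)).mul (huc.mono ?_)).add
        (((continuous_pow 3).continuousOn).mul (hdc.mono ?_))).intervalIntegrable) <;>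
        rw [uIcc_of_le h01] <;> exact hsub
  -- step 1
  set K : ℝ := ∫ ρ in (0:ℝ)..1, ρ ^ 4 * v ρ with hK_def
  set A : ℝ := ∫ ρ in (0:ℝ)..(1/2:ℝ), ρ ^ 2 * u ρ with hA_def
  have hK_nonneg : 0 ≤ K := by
    apply intervalIntegral.integral_nonneg (by norm_num)
    intro ρ _; positivity
  have step1 : ∀ t ∈ Icc (1/2:ℝ) 1, 2 * A ≤ t ^ 3 * u t + K := by
    intro t ht
    have hts : t ∈ s := ⟨by linarith [ht.1], ht.2⟩
    have h01 : (0:ℝ) ≤ t := by linarith [ht.1]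
    have hpt : ∀ ρ, -(ρ ^ 2 * u ρ + ρ ^ 4 * v ρ) ≤ ρ ^ 3 * d ρ := by
      intro ρ
      have hvρ : v ρ = (G ρ).re ^ 2 + (G ρ).im ^ 2 := hnorm (G ρ)
      rw [hvρ]
      simp only [hu_def, hd_def]
      nlinarith [sq_nonneg (ρ * (g ρ).re + ρ ^ 2 * (G ρ).re),
        sq_nonneg (ρ * (g ρ).im + ρ ^ 2 * (G ρ).im)]
    have hi1 : IntervalIntegrable (fun ρ => ρ ^ 2 * u ρ) volume 0 t :=
      hInt _ (((continuous_pow 2).continuousOn).mul huc) 0 t h0 hts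
    have hi2 : IntervalIntegrable (fun ρ => ρ ^ 4 * v ρ) volume 0 t :=
      hInt _ (((continuous_pow 4).continuousOn).mul hvc) 0 t h0 hts
    have hi3 : IntervalIntegrable (fun ρ => ρ ^ 3 * d ρ) volume 0 t :=
      hInt _ (((continuous_pow 3).continuousOn).mul hdc) 0 t h0 hts
    have hsplit : t ^ 3 * u t = 3 * (∫ ρ in (0:ℝ)..t, ρ ^ 2 * u ρ)
        + ∫ ρ in (0:ℝ)..t, ρ ^ 3 * d ρ := by
      rw [← key t ht, ← intervalIntegral.integral_const_mul,
        ← intervalIntegral.integral_add (hi1.const_mul 3) hi3]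
      congr 1; funext ρ; ring
    have hmono : -(∫ ρ in (0:ℝ)..t, (ρ ^ 2 * u ρ + ρ ^ 4 * v ρ)) ≤
        ∫ ρ in (0:ℝ)..t, ρ ^ 3 * d ρ := by
      rw [← intervalIntegral.integral_neg]
      apply intervalIntegral.integral_mono_on h01 (hi1.add hi2).neg hi3
      intro ρ _; exact hpt ρ
    rw [intervalIntegral.integral_add hi1 hi2] at hmono
    have hAt : A ≤ ∫ ρ in (0:ℝ)..t, ρ ^ 2 * u ρ := by
      have hsp : (∫ ρ in (0:ℝ)..t, ρ ^ 2 * u ρ) =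
          A + ∫ ρ in (1/2:ℝ)..t, ρ ^ 2 * u ρ := by
        rw [hA_def, intervalIntegral.integral_add_adjacent_intervals
          (hInt _ (((continuous_pow 2).continuousOn).fun_mul huc) 0 (1/2) h0 hhalf)
          (hInt _ (((continuous_pow 2).continuousOn).fun_mul huc) (1/2) t hhalf hts)]
      have hnn : 0 ≤ ∫ ρ in (1/2:ℝ)..t, ρ ^ 2 * u ρ := by
        apply intervalIntegral.integral_nonneg ht.1
        intro ρ _; positivity
      linarith
    have hKt : (∫ ρ in (0:ℝ)..t, ρ ^ 4 * v ρ) ≤ K := by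
      have hsp : K = (∫ ρ in (0:ℝ)..t, ρ ^ 4 * v ρ) + ∫ ρ in t..1, ρ ^ 4 * v ρ := by
        rw [hK_def, intervalIntegral.integral_add_adjacent_intervals hi2
          (hInt _ (((continuous_pow 4).continuousOn).mul hvc) t 1 hts h1)]
      have hnn : 0 ≤ ∫ ρ in t..1, ρ ^ 4 * v ρ := by
        apply intervalIntegral.integral_nonneg ht.2
        intro ρ _; positivity
      linarith
    linarith
  -- step 2: integrate step1 over t ∈ [1/2, 1]
  have hi_tu3 : IntervalIntegrable (fun t => t ^ 3 * u t) volume (1/2) 1 :=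
    hInt _ (((continuous_pow 3).continuousOn).mul huc) (1/2) 1 hhalf h1
  have hi_tu4 : IntervalIntegrable (fun t => t ^ 4 * u t) volume (1/2) 1 :=
    hInt _ (((continuous_pow 4).continuousOn).mul huc) (1/2) 1 hhalf h1
  have step2 : A ≤ 2 * (∫ t in (1/2:ℝ)..1, t ^ 4 * u t) + K / 2 := by
    have havg : (∫ _t in (1/2:ℝ)..1, 2 * A) ≤ ∫ t in (1/2:ℝ)..1, (t ^ 3 * u t + K) := by
      apply intervalIntegral.integral_mono_on (by norm_num)
        intervalIntegrable_const (hi_tu3.add intervalIntegrable_const)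
      intro t ht; exact step1 t ht
    rw [intervalIntegral.integral_const,
      intervalIntegral.integral_add hi_tu3 intervalIntegrable_const,
      intervalIntegral.integral_const] at havg
    have h34 : (∫ t in (1/2:ℝ)..1, t ^ 3 * u t) ≤ ∫ t in (1/2:ℝ)..1, 2 * (t ^ 4 * u t) := by
      apply intervalIntegral.integral_mono_on (by norm_num) hi_tu3 (hi_tu4.const_mul 2)
      intro t ht
      have ht0 : (0:ℝ) ≤ t := by linarith [ht.1]
      nlinarith [mul_nonneg (mul_nonneg (pow_nonneg ht0 3) (hu_nonneg t))
        (by linarith [ht.1] : (0:ℝ) ≤ 2 * t - 1)]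
    rw [intervalIntegral.integral_const_mul] at h34
    simp only [smul_eq_mul] at havg
    nlinarith [havg, h34]
  -- step 3
  set B : ℝ := ∫ ρ in (1/2:ℝ)..1, ρ ^ 2 * u ρ with hB_def
  have step3 : B ≤ 4 * ∫ ρ in (1/2:ℝ)..1, ρ ^ 4 * u ρ := by
    rw [← intervalIntegral.integral_const_mul]
    apply intervalIntegral.integral_mono_on (by norm_num)
      (hInt _ (((continuous_pow 2).continuousOn).fun_mul huc) (1/2) 1 hhalf h1)
      ((hInt _ (((continuous_pow 4).continuousOn).fun_mul huc) (1/2) 1 hhalf h1).const_mul 4)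
    intro ρ hρ
    nlinarith [mul_nonneg (mul_nonneg (sq_nonneg ρ) (hu_nonneg ρ))
      (by nlinarith [hρ.1] : (0:ℝ) ≤ 4 * ρ ^ 2 - 1)]
  -- assembling
  set U : ℝ := ∫ ρ in (0:ℝ)..1, ρ ^ 4 * u ρ with hU_def
  have hsplitU : U = (∫ ρ in (0:ℝ)..(1/2:ℝ), ρ ^ 4 * u ρ) + ∫ ρ in (1/2:ℝ)..1, ρ ^ 4 * u ρ := by
    rw [hU_def, intervalIntegral.integral_add_adjacent_intervals
      (hInt _ (((continuous_pow 4).continuousOn).fun_mul huc) 0 (1/2) h0 hhalf)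
      (hInt _ (((continuous_pow 4).continuousOn).fun_mul huc) (1/2) 1 hhalf h1)]
  have hU1 : (∫ ρ in (1/2:ℝ)..1, ρ ^ 4 * u ρ) ≤ U := by
    have hnn : 0 ≤ ∫ ρ in (0:ℝ)..(1/2:ℝ), ρ ^ 4 * u ρ := by
      apply intervalIntegral.integral_nonneg (by norm_num)
      intro ρ _; positivity
    linarith
  -- LHS rewrite
  have hLHS : (∫ ρ in (0:ℝ)..1, ‖g ρ‖ ^ 2 * ρ ^ 2) = A + B := by
    rw [hA_def, hB_def, intervalIntegral.integral_add_adjacent_intervals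
      (hInt _ (((continuous_pow 2).continuousOn).fun_mul huc) 0 (1/2) h0 hhalf)
      (hInt _ (((continuous_pow 2).continuousOn).fun_mul huc) (1/2) 1 hhalf h1)]
    apply intervalIntegral.integral_congr
    intro ρ _; simp only [hu_def, hnorm]; ring
  -- RHS rewrite
  have hW_nonneg : 0 ≤ ∫ ρ in (0:ℝ)..1, ρ ^ 4 * w ρ := by
    apply intervalIntegral.integral_nonneg (by norm_num)
    intro ρ _; positivity
  have hRHS : (∫ ρ in (0:ℝ)..1, (‖f ρ‖ ^ 2 + ‖g ρ‖ ^ 2 + ‖G ρ‖ ^ 2) * ρ ^ 4)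
      = (∫ ρ in (0:ℝ)..1, ρ ^ 4 * w ρ) + U + K := by
    have e1 : (∫ ρ in (0:ℝ)..1, (‖f ρ‖ ^ 2 + ‖g ρ‖ ^ 2 + ‖G ρ‖ ^ 2) * ρ ^ 4)
        = ∫ ρ in (0:ℝ)..1, ((fun x => x ^ 4 * w x) ρ + (fun x => x ^ 4 * u x) ρ
            + (fun x => x ^ 4 * v x) ρ) := by
      apply intervalIntegral.integral_congr
      intro ρ _
      simp only [hu_def, hv_def, hw_def, hnorm]; ring
    rw [e1, intervalIntegral.integral_add
      ((hInt _ (((continuous_pow 4).continuousOn).fun_mul hwc) 0 1 h0 h1).add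
        (hInt _ (((continuous_pow 4).continuousOn).fun_mul huc) 0 1 h0 h1))
      (hInt _ (((continuous_pow 4).continuousOn).fun_mul hvc) 0 1 h0 h1),
      intervalIntegral.integral_add
      (hInt _ (((continuous_pow 4).continuousOn).fun_mul hwc) 0 1 h0 h1)
      (hInt _ (((continuous_pow 4).continuousOn).fun_mul huc) 0 1 h0 h1)]
  rw [hLHS, hRHS]
  have hU_nonneg : 0 ≤ U := by
    rw [hU_def]
    apply intervalIntegral.integral_nonneg (by norm_num)
    intro ρ _; positivity
  nlinarith [step2, step3, hU1, hW_nonneg, hK_nonneg, hU_nonneg]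
end

section
/- There exists a constant C > 0 such that for every continuously differentiable function f : [0,1] → ℂ one has ( ∫₀¹ |f(ρ)|⁶·ρ¹⁰ dρ )^{1/3} ≤ C·∫₀¹ (|f(ρ)|² + |f'(ρ)|²)·ρ⁴ dρ. -/
open Set MeasureTheory

/-- Weighted Sobolev embedding: there is `C > 0` such that for every
`f ∈ C¹([0,1],ℂ)` one has `(∫₀¹ |f|⁶ρ¹⁰ dρ)^{1/3} ≤ C ∫₀¹ (|f|² + |f'|²)ρ⁴ dρ`. -/
theorem stmt_9 : ∃ C : ℝ, 0 < C ∧ ∀ f : ℝ → ℂ, ContDiffOn ℝ 1 f (Icc 0 1) →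
    (∫ ρ in (0:ℝ)..1, ‖f ρ‖ ^ 6 * ρ ^ 10) ^ ((1 : ℝ) / 3)
      ≤ C * ∫ ρ in (0:ℝ)..1, (‖f ρ‖ ^ 2 + ‖derivWithin f (Icc 0 1) ρ‖ ^ 2) * ρ ^ 4 := by
  refine ⟨100, by norm_num, ?_⟩
  intro f hf
  have uD : UniqueDiffOn ℝ (Icc (0:ℝ) 1) := uniqueDiffOn_Icc one_pos
  set g : ℝ → ℂ := derivWithin f (Icc 0 1) with hgdef
  set E : ℝ := ∫ ρ in (0:ℝ)..1, (‖f ρ‖ ^ 2 + ‖g ρ‖ ^ 2) * ρ ^ 4 with hEdef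
  have hfc : ContinuousOn f (Icc 0 1) := hf.continuousOn
  have hgc : ContinuousOn g (Icc 0 1) := hf.continuousOn_derivWithin uD le_rfl
  -- abbreviations (plain functions)
  set F : ℝ → ℝ := fun t => ‖f t‖ ^ 2 with hFdef
  set G : ℝ → ℝ := fun t => ‖g t‖ ^ 2 with hGdef
  set D : ℝ → ℝ := fun t => 2 * (inner ℝ (f t) (g t) : ℝ) with hDdef
  have hF0 : ∀ t, 0 ≤ F t := fun t => by simp only [hFdef]; positivity
  have hG0 : ∀ t, 0 ≤ G t := fun t => by simp only [hGdef]; positivity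
  have hFc : ContinuousOn F (Icc 0 1) := by
    simp only [hFdef]; exact (hfc.norm).pow 2
  have hGc : ContinuousOn G (Icc 0 1) := by
    simp only [hGdef]; exact (hgc.norm).pow 2
  have hDc : ContinuousOn D (Icc 0 1) := by
    simp only [hDdef]; exact continuousOn_const.mul (hfc.inner hgc)
  have hDabs : ∀ t, |D t| ≤ 2 * (‖f t‖ * ‖g t‖) := by
    intro t
    have h1 : |(inner ℝ (f t) (g t) : ℝ)| ≤ ‖f t‖ * ‖g t‖ := abs_real_inner_le_norm _ _
    calc |D t| = 2 * |(inner ℝ (f t) (g t) : ℝ)| := by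
          simp only [hDdef]; rw [abs_mul, abs_two]
      _ ≤ 2 * (‖f t‖ * ‖g t‖) := by linarith
  have hDb : ∀ t, |D t| ≤ F t + G t := by
    intro t
    have h1 := hDabs t
    have h2 : 2 * (‖f t‖ * ‖g t‖) ≤ F t + G t := by
      simp only [hFdef, hGdef]
      nlinarith [sq_nonneg (‖f t‖ - ‖g t‖)]
    linarith
  -- differentiability
  have hderiv : ∀ t ∈ Ioo (0:ℝ) 1, HasDerivAt f (g t) t := by
    intro t ht
    have h1 : DifferentiableWithinAt ℝ f (Icc 0 1) t :=
      (hf.differentiableOn one_ne_zero) t (Ioo_subset_Icc_self ht)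
    exact h1.hasDerivWithinAt.hasDerivAt (Icc_mem_nhds ht.1 ht.2)
  have hFderiv : ∀ t ∈ Ioo (0:ℝ) 1, HasDerivAt F (D t) t := by
    intro t ht
    exact (hderiv t ht).norm_sq
  -- FTC helper
  have FTC : ∀ (a b : ℝ) (φ ψ : ℝ → ℝ), a ≤ b → ContinuousOn φ (Icc a b) →
      (∀ t ∈ Ioo a b, HasDerivAt φ (ψ t) t) → IntervalIntegrable ψ volume a b →
      ∫ t in a..b, ψ t = φ b - φ a := by
    intro a b φ ψ hab hc hd hi
    exact intervalIntegral.integral_eq_sub_of_hasDeriv_right_of_le hab hc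
      (fun t ht => (hd t ht).hasDerivWithinAt) hi
  -- integrability helper
  have hInt : ∀ (φ : ℝ → ℝ), ContinuousOn φ (Icc 0 1) → ∀ a b : ℝ, 0 ≤ a → a ≤ b → b ≤ 1 →
      IntervalIntegrable φ volume a b := by
    intro φ hφ a b ha hab hb
    apply ContinuousOn.intervalIntegrable
    rw [uIcc_of_le hab]
    exact hφ.mono (Icc_subset_Icc ha hb)
  have hPc : ContinuousOn (fun t => (F t + G t) * t ^ 4) (Icc 0 1) :=
    (hFc.add hGc).mul ((continuousOn_id).pow 4)
  have hPnn : ∀ t ∈ Icc (0:ℝ) 1, 0 ≤ (F t + G t) * t ^ 4 := by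
    intro t ht
    exact mul_nonneg (add_nonneg (hF0 t) (hG0 t)) (pow_nonneg ht.1 4)
  have hEeq : E = ∫ t in (0:ℝ)..1, (F t + G t) * t ^ 4 := by
    rw [hEdef]
  have hE0 : 0 ≤ E := by
    rw [hEeq]
    exact intervalIntegral.integral_nonneg zero_le_one hPnn
  -- subinterval bound
  have hsub : ∀ a b : ℝ, 0 ≤ a → a ≤ b → b ≤ 1 →
      (∫ t in a..b, (F t + G t) * t ^ 4) ≤ E := by
    intro a b ha hab hb
    have i1 := hInt _ hPc 0 a le_rfl ha (hab.trans hb)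
    have i2 := hInt _ hPc a b ha hab hb
    have i3 := hInt _ hPc 0 b le_rfl (ha.trans hab) hb
    have i4 := hInt _ hPc b 1 (ha.trans hab) hb le_rfl
    have h1 := intervalIntegral.integral_add_adjacent_intervals i1 i2
    have h2 := intervalIntegral.integral_add_adjacent_intervals i3 i4
    have n1 : 0 ≤ ∫ t in (0:ℝ)..a, (F t + G t) * t ^ 4 :=
      intervalIntegral.integral_nonneg ha
        (fun t ht => hPnn t ⟨ht.1, ht.2.trans (hab.trans hb)⟩)
    have n2 : 0 ≤ ∫ t in b..1, (F t + G t) * t ^ 4 :=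
      intervalIntegral.integral_nonneg hb
        (fun t ht => hPnn t ⟨(ha.trans hab).trans ht.1, ht.2⟩)
    rw [hEeq]
    linarith
  -- Step A : F 1 ≤ 48 E
  have hA : F 1 ≤ 48 * E := by
    have hd : ∀ t ∈ Ioo (1/2 : ℝ) 1,
        HasDerivAt (fun s => F s * (2*s - 1)) (D t * (2*t-1) + F t * 2) t := by
      intro t ht
      have h1 : HasDerivAt (fun s : ℝ => 2*s - 1) 2 t := by
        simpa using ((hasDerivAt_id t).const_mul (2:ℝ)).sub_const 1
      exact (hFderiv t ⟨by linarith [ht.1], ht.2⟩).mul h1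
    have hc : ContinuousOn (fun s => F s * (2*s - 1)) (Icc (1/2:ℝ) 1) :=
      (hFc.mono (Icc_subset_Icc (by norm_num) le_rfl)).mul (by fun_prop)
    have hψc : ContinuousOn (fun t => D t * (2*t-1) + F t * 2) (Icc 0 1) :=
      (hDc.mul (by fun_prop)).add (hFc.mul continuousOn_const)
    have heq := FTC (1/2) 1 _ _ (by norm_num) hc hd
      (hInt _ hψc (1/2) 1 (by norm_num) (by norm_num) le_rfl)
    have hpt : ∀ t ∈ Icc (1/2:ℝ) 1,
        D t * (2*t-1) + F t * 2 ≤ 48 * ((F t + G t) * t ^ 4) := by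
      intro t ht
      have habs := abs_le.mp (hDb t)
      have h2t : 0 ≤ 2*t - 1 := by linarith [ht.1]
      have h2t' : 2*t - 1 ≤ 1 := by linarith [ht.2]
      have ht4 : (1:ℝ)/16 ≤ t ^ 4 := by
        have h := pow_le_pow_left₀ (show (0:ℝ) ≤ 1/2 by norm_num) ht.1 4
        norm_num at h
        linarith
      have e1 : D t * (2*t-1) ≤ (F t + G t) * 1 :=
        mul_le_mul habs.2 h2t' h2t (add_nonneg (hF0 t) (hG0 t))
      have e2 : 48 * (F t + G t) * (1/16) ≤ 48 * (F t + G t) * t ^ 4 :=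
        mul_le_mul_of_nonneg_left ht4
          (mul_nonneg (by norm_num) (add_nonneg (hF0 t) (hG0 t)))
      nlinarith [hF0 t, hG0 t]
    have hmono := intervalIntegral.integral_mono_on (by norm_num : (1/2:ℝ) ≤ 1)
      (hInt _ hψc (1/2) 1 (by norm_num) (by norm_num) le_rfl)
      ((hInt _ hPc (1/2) 1 (by norm_num) (by norm_num) le_rfl).const_mul 48) hpt
    rw [heq] at hmono
    rw [intervalIntegral.integral_const_mul] at hmono
    have hs := hsub (1/2) 1 (by norm_num) (by norm_num) le_rfl
    have : F 1 * (2*1-1) - F (1/2) * (2*(1/2:ℝ)-1) = F 1 := by norm_num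
    rw [this] at hmono
    linarith
  -- Step B : F ρ * ρ^4 ≤ 49 E on [0,1]
  have hB : ∀ ρ ∈ Icc (0:ℝ) 1, F ρ * ρ ^ 4 ≤ 49 * E := by
    intro ρ hρ
    have hd : ∀ t ∈ Ioo ρ 1,
        HasDerivAt (fun s => F s * s ^ 4) (D t * t ^ 4 + F t * (4*t^3)) t := by
      intro t ht
      have h1 : HasDerivAt (fun s : ℝ => s ^ 4) (4*t^3) t := by
        simpa using hasDerivAt_pow 4 t
      exact (hFderiv t ⟨lt_of_le_of_lt hρ.1 ht.1, ht.2⟩).mul h1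
    have hc : ContinuousOn (fun s => F s * s ^ 4) (Icc ρ 1) :=
      (hFc.mono (Icc_subset_Icc hρ.1 le_rfl)).mul (by fun_prop)
    have hψc : ContinuousOn (fun t => D t * t ^ 4 + F t * (4*t^3)) (Icc 0 1) :=
      (hDc.mul (by fun_prop)).add (hFc.mul (by fun_prop))
    have heq := FTC ρ 1 _ _ hρ.2 hc hd (hInt _ hψc ρ 1 hρ.1 hρ.2 le_rfl)
    have hpt : ∀ t ∈ Icc ρ 1,
        -((F t + G t) * t ^ 4) ≤ D t * t ^ 4 + F t * (4*t^3) := by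
      intro t ht
      have h0t : 0 ≤ t := le_trans hρ.1 ht.1
      have habs := abs_le.mp (hDb t)
      have e1 : (-(F t + G t)) * t ^ 4 ≤ D t * t ^ 4 :=
        mul_le_mul_of_nonneg_right habs.1 (pow_nonneg h0t 4)
      have e2 : 0 ≤ F t * (4*t^3) := mul_nonneg (hF0 t) (by positivity)
      nlinarith
    have hmono := intervalIntegral.integral_mono_on hρ.2
      (hInt (fun t => -((F t + G t) * t ^ 4)) hPc.neg ρ 1 hρ.1 hρ.2 le_rfl)
      (hInt _ hψc ρ 1 hρ.1 hρ.2 le_rfl) hpt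
    rw [heq, intervalIntegral.integral_neg] at hmono
    have hs := hsub ρ 1 hρ.1 hρ.2 le_rfl
    have h1 : F 1 * 1 ^ 4 = F 1 := by norm_num
    rw [h1] at hmono
    linarith
  -- Step C : Hardy-type bound A ≤ 33 E
  set A : ℝ := ∫ t in (0:ℝ)..1, F t * t ^ 2 with hAdef
  set B : ℝ := ∫ t in (0:ℝ)..1, G t * t ^ 4 with hBdef
  have hFt2c : ContinuousOn (fun t => F t * t ^ 2) (Icc 0 1) := hFc.mul (by fun_prop)
  have hGt4c : ContinuousOn (fun t => G t * t ^ 4) (Icc 0 1) := hGc.mul (by fun_prop)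
  have hDt3c : ContinuousOn (fun t => D t * t ^ 3) (Icc 0 1) := hDc.mul (by fun_prop)
  have hBE : B ≤ E := by
    have hpt : ∀ t ∈ Icc (0:ℝ) 1, G t * t ^ 4 ≤ (F t + G t) * t ^ 4 := by
      intro t ht
      have := hF0 t
      nlinarith [pow_nonneg ht.1 4]
    have := intervalIntegral.integral_mono_on zero_le_one
      (hInt _ hGt4c 0 1 le_rfl zero_le_one le_rfl)
      (hInt _ hPc 0 1 le_rfl zero_le_one le_rfl) hpt
    rw [hEeq]; rw [hBdef]; exact this
  have hC : A ≤ 33 * E := by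
    have hd : ∀ t ∈ Ioo (0:ℝ) 1,
        HasDerivAt (fun s => F s * s ^ 3) (D t * t ^ 3 + 3 * (F t * t ^ 2)) t := by
      intro t ht
      have h1 : HasDerivAt (fun s : ℝ => s ^ 3) (3*t^2) t := by
        simpa using hasDerivAt_pow 3 t
      have := (hFderiv t ht).mul h1
      refine this.congr_deriv ?_
      ring
    have hc : ContinuousOn (fun s => F s * s ^ 3) (Icc (0:ℝ) 1) :=
      hFc.mul (by fun_prop)
    have hψc : ContinuousOn (fun t => D t * t ^ 3 + 3 * (F t * t ^ 2)) (Icc 0 1) :=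
      hDt3c.add (continuousOn_const.mul hFt2c)
    have heq := FTC 0 1 _ _ zero_le_one hc hd (hInt _ hψc 0 1 le_rfl zero_le_one le_rfl)
    have lin2 : (∫ t in (0:ℝ)..1, (D t * t ^ 3 + 3 * (F t * t ^ 2)))
        = (∫ t in (0:ℝ)..1, D t * t ^ 3) + 3 * A := by
      rw [intervalIntegral.integral_add (hInt _ hDt3c 0 1 le_rfl zero_le_one le_rfl)
        ((hInt _ hFt2c 0 1 le_rfl zero_le_one le_rfl).const_mul 3),
        intervalIntegral.integral_const_mul, hAdef]
    have hval : F 1 * 1 ^ 3 - F 0 * 0 ^ 3 = F 1 := by norm_num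
    rw [lin2, hval] at heq
    -- lower bound on ∫ D t³
    have hpt : ∀ t ∈ Icc (0:ℝ) 1,
        -(3/2 * (F t * t ^ 2) + 2/3 * (G t * t ^ 4)) ≤ D t * t ^ 3 := by
      intro t ht
      have habs := abs_le.mp (hDabs t)
      have e1 : (-(2 * (‖f t‖ * ‖g t‖))) * t ^ 3 ≤ D t * t ^ 3 :=
        mul_le_mul_of_nonneg_right habs.1 (pow_nonneg ht.1 3)
      have e2 : 2 * (‖f t‖ * ‖g t‖) * t ^ 3
          ≤ 3/2 * (‖f t‖^2 * t ^ 2) + 2/3 * (‖g t‖^2 * t ^ 4) := by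
        nlinarith [sq_nonneg (3 * ‖f t‖ * t - 2 * ‖g t‖ * t ^ 2), pow_nonneg ht.1 3]
      simp only [hFdef, hGdef]
      nlinarith
    have hmono := intervalIntegral.integral_mono_on zero_le_one
      (hInt (fun t => -(3/2 * (F t * t ^ 2) + 2/3 * (G t * t ^ 4)))
        (((continuousOn_const.mul hFt2c).add (continuousOn_const.mul hGt4c)).neg)
        0 1 le_rfl zero_le_one le_rfl)
      (hInt _ hDt3c 0 1 le_rfl zero_le_one le_rfl) hpt
    have lin : (∫ t in (0:ℝ)..1, -(3/2 * (F t * t ^ 2) + 2/3 * (G t * t ^ 4)))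
        = -(3/2 * A + 2/3 * B) := by
      rw [intervalIntegral.integral_neg,
        intervalIntegral.integral_add ((hInt _ hFt2c 0 1 le_rfl zero_le_one le_rfl).const_mul (3/2))
          ((hInt _ hGt4c 0 1 le_rfl zero_le_one le_rfl).const_mul (2/3)),
        intervalIntegral.integral_const_mul, intervalIntegral.integral_const_mul,
        hAdef, hBdef]
    rw [lin] at hmono
    -- heq : ∫ D t³ + 3A = F 1 ; hmono : -(3/2 A + 2/3 B) ≤ ∫ D t³
    linarith
  -- Step D : final integral bound
  have hI0 : 0 ≤ ∫ ρ in (0:ℝ)..1, ‖f ρ‖ ^ 6 * ρ ^ 10 := by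
    apply intervalIntegral.integral_nonneg zero_le_one
    intro t ht
    positivity
  have hA0 : 0 ≤ A := by
    rw [hAdef]
    apply intervalIntegral.integral_nonneg zero_le_one
    intro t ht
    exact mul_nonneg (hF0 t) (pow_nonneg ht.1 2)
  have h6c : ContinuousOn (fun ρ : ℝ => ‖f ρ‖ ^ 6 * ρ ^ 10) (Icc 0 1) :=
    ((hfc.norm).pow 6).mul (by fun_prop)
  have hpt6 : ∀ ρ ∈ Icc (0:ℝ) 1,
      ‖f ρ‖ ^ 6 * ρ ^ 10 ≤ (49*E)^2 * (F ρ * ρ ^ 2) := by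
    intro ρ hρ
    have h1 := hB ρ hρ
    have h2 : 0 ≤ F ρ * ρ ^ 4 := mul_nonneg (hF0 ρ) (pow_nonneg hρ.1 4)
    have key : (F ρ * ρ ^ 4) ^ 2 ≤ (49*E) ^ 2 := pow_le_pow_left₀ h2 h1 2
    have h3 : ‖f ρ‖ ^ 6 * ρ ^ 10 = (F ρ * ρ ^ 4) ^ 2 * (F ρ * ρ ^ 2) := by
      simp only [hFdef]; ring
    rw [h3]
    exact mul_le_mul_of_nonneg_right key (mul_nonneg (hF0 ρ) (pow_nonneg hρ.1 2))
  have hI1 : (∫ ρ in (0:ℝ)..1, ‖f ρ‖ ^ 6 * ρ ^ 10) ≤ (49*E)^2 * A := by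
    have := intervalIntegral.integral_mono_on zero_le_one
      (hInt _ h6c 0 1 le_rfl zero_le_one le_rfl)
      ((hInt _ hFt2c 0 1 le_rfl zero_le_one le_rfl).const_mul ((49*E)^2)) hpt6
    rwa [intervalIntegral.integral_const_mul, ← hAdef] at this
  have hI2 : (∫ ρ in (0:ℝ)..1, ‖f ρ‖ ^ 6 * ρ ^ 10) ≤ (100 * E) ^ 3 := by
    have h1 : (49*E)^2 * A ≤ (49*E)^2 * (33*E) :=
      mul_le_mul_of_nonneg_left hC (by positivity)
    have h2 : (49*E)^2 * (33*E) ≤ (100*E)^3 := by nlinarith [hE0, sq_nonneg E]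
    linarith
  -- conclusion
  calc (∫ ρ in (0:ℝ)..1, ‖f ρ‖ ^ 6 * ρ ^ 10) ^ ((1:ℝ)/3)
      ≤ ((100*E)^3) ^ ((1:ℝ)/3) := Real.rpow_le_rpow hI0 hI2 (by norm_num)
    _ = 100 * E := by
        have h100 : (0:ℝ) ≤ 100 * E := by linarith
        rw [← Real.rpow_natCast (100*E) 3, ← Real.rpow_mul h100]
        norm_num
end

section
/- Let α > 0 and C > 0. There exists a constant C' > 0, depending only on α and C, such that for every twice continuously differentiable function f : ℝ → ℂ satisfying |f(ω)| ≤ C·⟨ω⟩^{−1−α}, |f'(ω)| ≤ C·⟨ω⟩^{−2−α} and |f''(ω)| ≤ C·⟨ω⟩^{−3−α} for all ω ∈ ℝ, and for every a ∈ ℝ, one has | ∫_ℝ e^{iωa}·f(ω) dω | ≤ C'·⟨a⟩^{−2}. -/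
open MeasureTheory RealInnerProductSpace

private lemma aux_int_jb {p : ℝ} (hp : 1 < p) :
    Integrable (fun ω : ℝ => Real.sqrt (1 + ω ^ 2) ^ (-p)) := by
  have h := integrable_rpow_neg_one_add_norm_sq (E := ℝ) (μ := volume) (r := p)
    (by simpa using hp)
  have he : (fun ω : ℝ => Real.sqrt (1 + ω ^ 2) ^ (-p))
      = fun x : ℝ => ((1 : ℝ) + ‖x‖ ^ 2) ^ (-p / 2) := by
    funext ω
    rw [Real.norm_eq_abs, sq_abs, Real.sqrt_eq_rpow, ← Real.rpow_mul (by positivity)]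
    congr 1
    ring
  rw [he]
  exact h

/-- Oscillatory integral bound: if `f ∈ C²(ℝ,ℂ)` satisfies the symbol
bounds `|f⁽ʲ⁾(ω)| ≤ C⟨ω⟩^{−j−1−α}` for `j = 0,1,2`, then
`|∫ e^{iωa} f(ω) dω| ≤ C'⟨a⟩⁻²` with `C'` depending only on `α` and `C`. -/
theorem stmt_11 (α C : ℝ) (hα : 0 < α) (hC : 0 < C) :
    ∃ C' : ℝ, 0 < C' ∧ ∀ f : ℝ → ℂ, ContDiff ℝ 2 f →
      (∀ ω : ℝ, ‖f ω‖ ≤ C * Real.sqrt (1 + ω ^ 2) ^ (-(1 + α))) →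
      (∀ ω : ℝ, ‖deriv f ω‖ ≤ C * Real.sqrt (1 + ω ^ 2) ^ (-(2 + α))) →
      (∀ ω : ℝ, ‖deriv (deriv f) ω‖ ≤ C * Real.sqrt (1 + ω ^ 2) ^ (-(3 + α))) →
      ∀ a : ℝ,
        ‖∫ ω : ℝ, Complex.exp (Complex.I * ω * a) * f ω‖
          ≤ C' * Real.sqrt (1 + a ^ 2) ^ (-2 : ℝ) := by
  set I₀ : ℝ := ∫ ω : ℝ, Real.sqrt (1 + ω ^ 2) ^ (-(1 + α)) with hI₀
  have hI₀nn : 0 ≤ I₀ := integral_nonneg fun ω => by positivity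
  refine ⟨2 * C * I₀ + 1, by positivity, ?_⟩
  intro f hf hf0 hf1 hf2 a
  have hπ : (0 : ℝ) < Real.pi := Real.pi_pos
  -- pointwise monotonicity of the bracket powers
  have hsq1 : ∀ ω : ℝ, 1 ≤ Real.sqrt (1 + ω ^ 2) := by
    intro ω
    have := Real.sqrt_le_sqrt (show (1 : ℝ) ≤ 1 + ω ^ 2 by nlinarith [sq_nonneg ω])
    simpa using this
  have hmono : ∀ q : ℝ, 1 + α ≤ q → ∀ ω : ℝ,
      Real.sqrt (1 + ω ^ 2) ^ (-q) ≤ Real.sqrt (1 + ω ^ 2) ^ (-(1 + α)) := by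
    intro q hq ω
    exact Real.rpow_le_rpow_of_exponent_le (hsq1 ω) (by linarith)
  -- integrability
  have hb1 : Integrable (fun ω : ℝ => C * Real.sqrt (1 + ω ^ 2) ^ (-(1 + α))) :=
    (aux_int_jb (by linarith)).const_mul C
  have hint_f : Integrable f :=
    hb1.mono' hf.continuous.aestronglyMeasurable (Filter.Eventually.of_forall hf0)
  have hdiff : Differentiable ℝ f := hf.differentiable (by norm_num)
  have hcd1 : ContDiff ℝ 1 (deriv f) := by
    rw [show (2 : WithTop ℕ∞) = 1 + 1 from by norm_num] at hf
    exact (contDiff_succ_iff_deriv.mp hf).2.2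
  have hdiff' : Differentiable ℝ (deriv f) := hcd1.differentiable (by norm_num)
  have hcont'' : Continuous (deriv (deriv f)) := by
    have hcd1' := hcd1
    rw [show (1 : WithTop ℕ∞) = 0 + 1 from by norm_num] at hcd1'
    exact (contDiff_succ_iff_deriv.mp hcd1').2.2.continuous
  have hint_f' : Integrable (deriv f) := by
    refine ((aux_int_jb (show (1:ℝ) < 2 + α by linarith)).const_mul C).mono'
      hcd1.continuous.aestronglyMeasurable (Filter.Eventually.of_forall ?_)
    exact hf1
  have hint_f'' : Integrable (deriv (deriv f)) := by
    refine ((aux_int_jb (show (1:ℝ) < 3 + α by linarith)).const_mul C).mono'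
      hcont''.aestronglyMeasurable (Filter.Eventually.of_forall ?_)
    exact hf2
  -- the frequency
  set w : ℝ := -(a / (2 * Real.pi)) with hw
  have h2πw : 2 * Real.pi * w = -a := by
    rw [hw]; field_simp
  -- the integral is the Fourier transform at w
  have hFa : (∫ ω : ℝ, Complex.exp (Complex.I * ω * a) * f ω) = FourierTransform.fourier f w := by
    rw [Real.fourier_eq']
    congr 1
    funext v
    rw [smul_eq_mul]
    congr 1
    have hin : (inner ℝ v w : ℝ) = v * w := by
      simp [RCLike.inner_apply, mul_comm]
    have harg : -2 * Real.pi * (inner ℝ v w : ℝ) = v * a := by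
      rw [hin]
      calc -2 * Real.pi * (v * w) = v * -(2 * Real.pi * w) := by ring
        _ = v * a := by rw [h2πw]; ring
    rw [harg]
    push_cast
    ring_nf
  -- Fourier transform of second derivative
  have e1 := congrFun (Real.fourier_deriv hint_f hdiff hint_f') w
  have e2 := congrFun (Real.fourier_deriv hint_f' hdiff' hint_f'') w
  rw [e1] at e2
  have hnorm2πw : ‖(2 * Real.pi * Complex.I * (w : ℂ))‖ = |a| := by
    have h : (2 * Real.pi * Complex.I * (w : ℂ)) = ((2 * Real.pi * w : ℝ) : ℂ) * Complex.I := by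
      push_cast; ring
    rw [h, norm_mul, Complex.norm_real, Complex.norm_I, mul_one, h2πw,
      Real.norm_eq_abs, abs_neg]
  -- the uniform L¹ bounds
  have hbound0 : ‖FourierTransform.fourier f w‖ ≤ C * I₀ := by
    rw [Real.fourier_eq']
    refine (norm_integral_le_of_norm_le hb1 (Filter.Eventually.of_forall fun v => ?_)).trans ?_
    · rw [smul_eq_mul, norm_mul, Complex.norm_exp_ofReal_mul_I, one_mul]
      exact hf0 v
    · rw [integral_const_mul]
  have hbound'' : ‖FourierTransform.fourier (deriv (deriv f)) w‖ ≤ C * I₀ := by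
    rw [Real.fourier_eq']
    refine (norm_integral_le_of_norm_le hb1 (Filter.Eventually.of_forall fun v => ?_)).trans ?_
    · rw [smul_eq_mul, norm_mul, Complex.norm_exp_ofReal_mul_I, one_mul]
      exact (hf2 v).trans (by
        have := hmono (3 + α) (by linarith) v
        nlinarith)
    · rw [integral_const_mul]
  have hkey : a ^ 2 * ‖FourierTransform.fourier f w‖ ≤ C * I₀ := by
    have heq : a ^ 2 * ‖FourierTransform.fourier f w‖
        = ‖FourierTransform.fourier (deriv (deriv f)) w‖ := by
      rw [e2, norm_smul, norm_smul, hnorm2πw, ← mul_assoc]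
      congr 1
      rw [← sq_abs]
      ring
    rw [heq]
    exact hbound''
  -- conclude
  rw [hFa]
  have h1a : (0 : ℝ) < 1 + a ^ 2 := by positivity
  have hden : Real.sqrt (1 + a ^ 2) ^ (-2 : ℝ) = (1 + a ^ 2)⁻¹ := by
    rw [show (-2 : ℝ) = -((2 : ℕ) : ℝ) by norm_num, Real.rpow_neg (Real.sqrt_nonneg _),
      Real.rpow_natCast, Real.sq_sqrt h1a.le]
  rw [hden, ← div_eq_mul_inv, le_div_iff₀ h1a]
  nlinarith [hkey, hbound0, norm_nonneg (FourierTransform.fourier f w)]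
end

section
/- Let α ∈ (0,1) and β ∈ [0,1). There exists a constant C > 0, depending only on α and β, such that for all a ∈ ℝ with a ≠ 0, both ∫₀¹ s^{−β}·|a + (1/2)·log(1 − s²)|^{−α} ds ≤ C·|a|^{−α} and ∫₀¹ s^{−β}·|a − (1/2)·log(1 − s²)|^{−α} ds ≤ C·|a|^{−α}. -/
open MeasureTheory Set intervalIntegral

namespace Stmt14

noncomputable def f (s : ℝ) : ℝ := -((1/2) * Real.log (1 - s^2))

lemma f_nonneg {s : ℝ} (h0 : -1 ≤ s) (h1 : s ≤ 1) : 0 ≤ f s := by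
  have hx0 : (0:ℝ) ≤ 1 - s^2 := by nlinarith
  have hx1 : 1 - s^2 ≤ 1 := by nlinarith
  have := Real.log_nonpos hx0 hx1
  simp only [f]; linarith

lemma f_one : f 1 = 0 := by simp [f]

lemma f_mono {s t : ℝ} (h0 : 0 ≤ s) (hst : s ≤ t) (ht : t < 1) : f s ≤ f t := by
  have h1 : (0:ℝ) < 1 - t^2 := by nlinarith
  have h2 : 1 - t^2 ≤ 1 - s^2 := by nlinarith
  have := Real.log_le_log h1 h2
  simp only [f]; linarith

lemma f_key {u t s : ℝ} (hu : 0 < u) (hut : u ≤ t) (hts : t ≤ s) (hs : s < 1) :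
    (f u / u) * (s - t) ≤ f s - f t := by
  have ht1 : t < 1 := lt_of_le_of_lt hts hs
  have hu1 : u < 1 := lt_of_le_of_lt hut ht1
  have hs2 : (0:ℝ) < 1 - s^2 := by nlinarith
  have ht2 : (0:ℝ) < 1 - t^2 := by nlinarith
  have hu2 : (0:ℝ) < 1 - u^2 := by nlinarith
  have hlog1 : Real.log (1-s^2) - Real.log (1-t^2) ≤ (1-s^2)/(1-t^2) - 1 := by
    have h := Real.log_le_sub_one_of_pos (div_pos hs2 ht2)
    rwa [Real.log_div (ne_of_gt hs2) (ne_of_gt ht2)] at h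
  have hlog2 : -Real.log (1-u^2) ≤ u^2/(1-u^2) := by
    have h := Real.log_le_sub_one_of_pos (inv_pos.mpr hu2)
    rw [Real.log_inv] at h
    have : (1-u^2)⁻¹ - 1 = u^2/(1-u^2) := by field_simp; ring
    linarith
  have step1 : (s^2-t^2)/(2*(1-t^2)) ≤ f s - f t := by
    simp only [f]
    have e : (1-s^2)/(1-t^2) - 1 = -((s^2-t^2)/(1-t^2)) := by field_simp; ring
    rw [e] at hlog1
    have : (s^2-t^2)/(1-t^2) ≤ Real.log (1-t^2) - Real.log (1-s^2) := by linarith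
    have e2 : (s^2-t^2)/(2*(1-t^2)) = ((s^2-t^2)/(1-t^2))/2 := by
      rw [div_div]; ring_nf
    rw [e2]; linarith
  have step2 : (f u / u) * (s - t) ≤ (s^2-t^2)/(2*(1-t^2)) := by
    have hfu : f u ≤ (1/2) * (u^2/(1-u^2)) := by
      simp only [f]; linarith
    have hfu2 : f u / u ≤ u / (2*(1-u^2)) := by
      rw [div_le_div_iff₀ hu (by linarith)]
      have : f u * (2*(1-u^2)) ≤ u^2 := by
        have h2 : (2:ℝ)*(1-u^2) > 0 := by linarith
        calc f u * (2*(1-u^2)) ≤ ((1/2) * (u^2/(1-u^2))) * (2*(1-u^2)) := by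
              apply mul_le_mul_of_nonneg_right hfu (le_of_lt h2)
          _ = u^2 := by field_simp
      nlinarith
    have hmid : u / (2*(1-u^2)) ≤ (s+t) / (2*(1-t^2)) := by
      rw [div_le_div_iff₀ (by linarith) (by linarith)]
      nlinarith [mul_nonneg (sub_nonneg.mpr hts) hu2.le, mul_nonneg (sub_nonneg.mpr hut) hu2.le,
        mul_nonneg hu.le (show (0:ℝ) ≤ t^2 - u^2 by nlinarith), mul_nonneg hu.le hu2.le]
    have hst' : 0 ≤ s - t := by linarith
    calc (f u / u) * (s - t) ≤ (u / (2*(1-u^2))) * (s - t) :=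
          mul_le_mul_of_nonneg_right hfu2 hst'
      _ ≤ ((s+t) / (2*(1-t^2))) * (s - t) := mul_le_mul_of_nonneg_right hmid hst'
      _ = (s^2-t^2)/(2*(1-t^2)) := by field_simp; ring
  linarith

noncomputable def g (y : ℝ) : ℝ := Real.sqrt (1 - Real.exp (-2*y))

lemma g_nonneg (y : ℝ) : 0 ≤ g y := Real.sqrt_nonneg _

lemma g_lt_one (y : ℝ) : g y < 1 := by
  have h := Real.exp_pos (-2*y)
  exact (Real.sqrt_lt' one_pos).mpr (by nlinarith)

lemma g_pos {y : ℝ} (hy : 0 < y) : 0 < g y := by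
  apply Real.sqrt_pos.mpr
  have : Real.exp (-2*y) < 1 := by
    rw [Real.exp_lt_one_iff]; linarith
  linarith

lemma g_mono {y z : ℝ} (h : y ≤ z) : g y ≤ g z := by
  apply Real.sqrt_le_sqrt
  have := Real.exp_le_exp.mpr (show -2*z ≤ -2*y by linarith)
  linarith

lemma f_g {y : ℝ} (hy : 0 ≤ y) : f (g y) = y := by
  have hle : Real.exp (-2*y) ≤ 1 := Real.exp_le_one_iff.mpr (by linarith)
  have h2 : (g y)^2 = 1 - Real.exp (-2*y) := Real.sq_sqrt (by linarith)
  simp only [f, h2]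
  rw [show 1 - (1 - Real.exp (-2*y)) = Real.exp (-2*y) by ring, Real.log_exp]
  ring

lemma hmeas (α β a : ℝ) : Measurable (fun s : ℝ => s ^ (-β) * |a - f s| ^ (-α)) := by
  unfold f; measurability

lemma integrable_piece {h maj : ℝ → ℝ} {x y : ℝ} (hxy : x ≤ y)
    (hm : Measurable h) (hmaj : IntervalIntegrable maj volume x y)
    (hb : ∀ s ∈ Set.Icc x y, |h s| ≤ maj s) :
    IntervalIntegrable h volume x y := by
  refine hmaj.mono_fun' hm.aestronglyMeasurable.restrict ?_
  rw [Set.uIoc_of_le hxy]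
  refine (MeasureTheory.ae_restrict_iff' measurableSet_Ioc).mpr
    (Filter.Eventually.of_forall fun s hs => ?_)
  simpa [Real.norm_eq_abs] using hb s (Set.Ioc_subset_Icc_self hs)

lemma main_pos {α β a : ℝ} (hα0 : 0 < α) (hα1 : α < 1) (hβ0 : 0 ≤ β) (hβ1 : β < 1)
    (ha : 0 < a) :
    IntervalIntegrable (fun s : ℝ => s ^ (-β) * |a - f s| ^ (-α)) volume 0 1 ∧
    (∫ s in (0:ℝ)..1, s ^ (-β) * |a - f s| ^ (-α)) ≤ (4/(1-β) + 4/(1-α)) * a ^ (-α) := by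
  have hαneg : -α ≤ 0 := by linarith
  have hβneg : -β ≤ 0 := by linarith
  set h : ℝ → ℝ := fun s => s ^ (-β) * |a - f s| ^ (-α) with hh
  set u := g (a/2) with hudef
  set s₀ := g a with hs₀def
  set v := g (a + a/2) with hvdef
  have hu0 : 0 < u := g_pos (by linarith)
  have hu1 : u < 1 := g_lt_one _
  have hs₀1 : s₀ < 1 := g_lt_one _
  have hv1 : v < 1 := g_lt_one _
  have hus₀ : u ≤ s₀ := g_mono (by linarith)
  have hs₀v : s₀ ≤ v := g_mono (by linarith)
  have hs₀0 : 0 < s₀ := lt_of_lt_of_le hu0 hus₀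
  have hfu : f u = a/2 := f_g (by linarith)
  have hfs₀ : f s₀ = a := f_g ha.le
  have hfv : f v = a + a/2 := f_g (by linarith)
  set c := a / (2*u) with hcdef
  have hc0 : 0 < c := div_pos ha (by linarith)
  have hfuu : f u / u = c := by rw [hfu, hcdef, div_div]
  -- v - u ≤ 2u
  have hvu : v - u ≤ 2*u := by
    have hk := f_key hu0 le_rfl (hus₀.trans hs₀v) hv1
    rw [hfuu, hfv, hfu] at hk
    have h1 : (v - u) * c ≤ a := by linarith
    have h2 : v - u ≤ a / c := (le_div_iff₀ hc0).mpr h1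
    have h3 : a / c = 2*u := by
      rw [hcdef]; field_simp
    linarith
  have hnn : ∀ s : ℝ, 0 ≤ s → 0 ≤ h s := fun s hs =>
    mul_nonneg (Real.rpow_nonneg hs _) (Real.rpow_nonneg (abs_nonneg _) _)
  have haα : (0:ℝ) ≤ a ^ (-α) := Real.rpow_nonneg ha.le _
  -- pointwise bounds
  have hP1 : ∀ s ∈ Icc (0:ℝ) u, h s ≤ (a/2) ^ (-α) * s ^ (-β) := by
    intro s hs
    have hfs : f s ≤ a/2 := by rw [← hfu]; exact f_mono hs.1 hs.2 hu1
    have habs : a/2 ≤ |a - f s| := le_trans (by linarith) (le_abs_self _)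
    have hr := Real.rpow_le_rpow_of_nonpos (by linarith) habs hαneg
    calc h s = s ^ (-β) * |a - f s| ^ (-α) := rfl
      _ ≤ s ^ (-β) * (a/2) ^ (-α) := mul_le_mul_of_nonneg_left hr (Real.rpow_nonneg hs.1 _)
      _ = (a/2) ^ (-α) * s ^ (-β) := mul_comm _ _
  have hP4 : ∀ s ∈ Icc v (1:ℝ), h s ≤ (a/2) ^ (-α) * s ^ (-β) := by
    intro s hs
    have hs0 : (0:ℝ) ≤ s := le_trans (g_nonneg _) hs.1
    have habs : a/2 ≤ |a - f s| := by
      rcases eq_or_lt_of_le hs.2 with he | hlt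
      · rw [he, f_one]; rw [abs_of_pos (by linarith : (0:ℝ) < a - 0)]; linarith
      · have hfs : a + a/2 ≤ f s := by rw [← hfv]; exact f_mono (g_nonneg _) hs.1 hlt
        calc a/2 ≤ f s - a := by linarith
          _ ≤ |f s - a| := le_abs_self _
          _ = |a - f s| := abs_sub_comm _ _
    have hr := Real.rpow_le_rpow_of_nonpos (by linarith) habs hαneg
    calc h s = s ^ (-β) * |a - f s| ^ (-α) := rfl
      _ ≤ s ^ (-β) * (a/2) ^ (-α) := mul_le_mul_of_nonneg_left hr (Real.rpow_nonneg hs0 _)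
      _ = (a/2) ^ (-α) * s ^ (-β) := mul_comm _ _
  have hP2 : ∀ s ∈ Icc u s₀, h s ≤ (u ^ (-β) * c ^ (-α)) * (s₀ - s) ^ (-α) := by
    intro s hs
    have hsb : s ^ (-β) ≤ u ^ (-β) := Real.rpow_le_rpow_of_nonpos hu0 hs.1 hβneg
    rcases eq_or_lt_of_le hs.2 with he | hlt
    · rw [he]
      have e1 : |a - f s₀| = 0 := by rw [hfs₀]; simp
      have e2 : h s₀ = 0 := by
        rw [hh]; simp only [e1, Real.zero_rpow (by linarith : -α ≠ 0), mul_zero]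
      rw [e2, sub_self, Real.zero_rpow (by linarith : -α ≠ 0), mul_zero]
    · have hkey := f_key hu0 hs.1 hlt.le hs₀1
      rw [hfuu, hfs₀] at hkey
      have h1 : c * (s₀ - s) ≤ |a - f s| := le_trans (by linarith) (le_abs_self _)
      have hpos : 0 < c * (s₀ - s) := mul_pos hc0 (by linarith)
      have h3 : |a - f s| ^ (-α) ≤ (c * (s₀ - s)) ^ (-α) :=
        Real.rpow_le_rpow_of_nonpos hpos h1 hαneg
      have h4 : (c * (s₀ - s)) ^ (-α) = c ^ (-α) * (s₀ - s) ^ (-α) :=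
        Real.mul_rpow hc0.le (by linarith)
      calc h s ≤ u ^ (-β) * (c ^ (-α) * (s₀ - s) ^ (-α)) :=
            mul_le_mul hsb (h3.trans_eq h4) (Real.rpow_nonneg (abs_nonneg _) _)
              (Real.rpow_nonneg hu0.le _)
        _ = (u ^ (-β) * c ^ (-α)) * (s₀ - s) ^ (-α) := by ring
  have hP3 : ∀ s ∈ Icc s₀ v, h s ≤ (u ^ (-β) * c ^ (-α)) * (s - s₀) ^ (-α) := by
    intro s hs
    have hsu : u ≤ s := hus₀.trans hs.1
    have hsb : s ^ (-β) ≤ u ^ (-β) := Real.rpow_le_rpow_of_nonpos hu0 hsu hβneg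
    rcases eq_or_lt_of_le hs.1 with he | hlt
    · rw [← he]
      have e1 : |a - f s₀| = 0 := by rw [hfs₀]; simp
      have e2 : h s₀ = 0 := by
        rw [hh]; simp only [e1, Real.zero_rpow (by linarith : -α ≠ 0), mul_zero]
      rw [e2, sub_self, Real.zero_rpow (by linarith : -α ≠ 0), mul_zero]
    · have hkey := f_key hu0 hus₀ hlt.le (lt_of_le_of_lt hs.2 hv1)
      rw [hfuu, hfs₀] at hkey
      have h1 : c * (s - s₀) ≤ |a - f s| := by
        calc c * (s - s₀) ≤ f s - a := hkey
          _ ≤ |f s - a| := le_abs_self _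
          _ = |a - f s| := abs_sub_comm _ _
      have hpos : 0 < c * (s - s₀) := mul_pos hc0 (by linarith)
      have h3 : |a - f s| ^ (-α) ≤ (c * (s - s₀)) ^ (-α) :=
        Real.rpow_le_rpow_of_nonpos hpos h1 hαneg
      have h4 : (c * (s - s₀)) ^ (-α) = c ^ (-α) * (s - s₀) ^ (-α) :=
        Real.mul_rpow hc0.le (by linarith)
      calc h s ≤ u ^ (-β) * (c ^ (-α) * (s - s₀) ^ (-α)) :=
            mul_le_mul hsb (h3.trans_eq h4) (Real.rpow_nonneg (abs_nonneg _) _)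
              (Real.rpow_nonneg hu0.le _)
        _ = (u ^ (-β) * c ^ (-α)) * (s - s₀) ^ (-α) := by ring
  -- majorant integrability
  have hm : Measurable h := hmeas α β a
  have hM1 : ∀ x y : ℝ, IntervalIntegrable (fun s : ℝ => (a/2) ^ (-α) * s ^ (-β)) volume x y :=
    fun x y => (intervalIntegrable_rpow' (by linarith)).const_mul _
  have hM2 : IntervalIntegrable (fun s : ℝ => (u ^ (-β) * c ^ (-α)) * (s₀ - s) ^ (-α))
      volume u s₀ := by
    have base : IntervalIntegrable (fun x : ℝ => x ^ (-α)) volume (s₀ - u) 0 :=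
      intervalIntegrable_rpow' (by linarith)
    have := (base.comp_sub_left s₀).const_mul (u ^ (-β) * c ^ (-α))
    simpa using this
  have hM3 : IntervalIntegrable (fun s : ℝ => (u ^ (-β) * c ^ (-α)) * (s - s₀) ^ (-α))
      volume s₀ v := by
    have base : IntervalIntegrable (fun x : ℝ => x ^ (-α)) volume 0 (v - s₀) :=
      intervalIntegrable_rpow' (by linarith)
    have := (base.comp_sub_right s₀).const_mul (u ^ (-β) * c ^ (-α))
    simpa using this
  -- integrability of h on pieces
  have I1 : IntervalIntegrable h volume 0 u :=
    integrable_piece hu0.le hm (hM1 0 u)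
      (fun s hs => by rw [abs_of_nonneg (hnn s hs.1)]; exact hP1 s hs)
  have I2 : IntervalIntegrable h volume u s₀ :=
    integrable_piece hus₀ hm hM2
      (fun s hs => by rw [abs_of_nonneg (hnn s (le_trans hu0.le hs.1))]; exact hP2 s hs)
  have I3 : IntervalIntegrable h volume s₀ v :=
    integrable_piece hs₀v hm hM3
      (fun s hs => by rw [abs_of_nonneg (hnn s (le_trans hs₀0.le hs.1))]; exact hP3 s hs)
  have I4 : IntervalIntegrable h volume v 1 :=
    integrable_piece hv1.le hm (hM1 v 1)
      (fun s hs => by rw [abs_of_nonneg (hnn s (le_trans (g_nonneg _) hs.1))]; exact hP4 s hs)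
  have Ifull : IntervalIntegrable h volume 0 1 := ((I1.trans I2).trans I3).trans I4
  refine ⟨Ifull, ?_⟩
  -- split
  have hsplit : (∫ s in (0:ℝ)..1, h s) =
      (∫ s in (0:ℝ)..u, h s) + (∫ s in u..s₀, h s) + (∫ s in s₀..v, h s)
        + (∫ s in v..(1:ℝ), h s) := by
    rw [integral_add_adjacent_intervals I1 I2, integral_add_adjacent_intervals (I1.trans I2) I3,
      integral_add_adjacent_intervals ((I1.trans I2).trans I3) I4]
  -- bounds on pieces
  have h1β : (0:ℝ) < 1 - β := by linarith
  have h1α : (0:ℝ) < 1 - α := by linarith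
  have hA2 : (a/2) ^ (-α) = a ^ (-α) * 2 ^ α := by
    rw [Real.div_rpow ha.le (by norm_num : (0:ℝ) ≤ 2),
      Real.rpow_neg (by norm_num : (0:ℝ) ≤ 2) α, div_eq_mul_inv, inv_inv]
  have h2α : (2:ℝ) ^ α ≤ 2 := by
    calc (2:ℝ) ^ α ≤ 2 ^ (1:ℝ) :=
          Real.rpow_le_rpow_of_exponent_le one_le_two hα1.le
      _ = 2 := Real.rpow_one 2
  have hA2le : (a/2) ^ (-α) ≤ 2 * a ^ (-α) := by
    rw [hA2]
    calc a ^ (-α) * 2 ^ α ≤ a ^ (-α) * 2 := mul_le_mul_of_nonneg_left h2α haα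
      _ = 2 * a ^ (-α) := mul_comm _ _
  have hA20 : (0:ℝ) ≤ (a/2) ^ (-α) := Real.rpow_nonneg (by linarith) _
  -- piece 1
  have hJ1 : (∫ s in (0:ℝ)..u, h s) ≤ 2 * a ^ (-α) / (1-β) := by
    have hmono := integral_mono_on hu0.le I1 (hM1 0 u) hP1
    have hval : (∫ s in (0:ℝ)..u, (a/2) ^ (-α) * s ^ (-β))
        = (a/2) ^ (-α) * ((u ^ (-β+1) - 0 ^ (-β+1)) / (-β+1)) := by
      rw [intervalIntegral.integral_const_mul, integral_rpow (Or.inl (by linarith))]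
    rw [hval, Real.zero_rpow (by linarith : -β+1 ≠ 0), sub_zero] at hmono
    have hule : u ^ (-β+1) ≤ 1 := Real.rpow_le_one hu0.le hu1.le (by linarith)
    have hfrac : u ^ (-β+1) / (-β+1) ≤ 1 / (1-β) := by
      rw [show -β+(1:ℝ) = 1-β by ring] at hule ⊢
      gcongr
    calc (∫ s in (0:ℝ)..u, h s) ≤ (a/2) ^ (-α) * (u ^ (-β+1) / (-β+1)) := hmono
      _ ≤ (2 * a ^ (-α)) * (1 / (1-β)) :=
          mul_le_mul hA2le hfrac
            (div_nonneg (Real.rpow_nonneg hu0.le _) (by linarith)) (by linarith)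
      _ = 2 * a ^ (-α) / (1-β) := by ring
  -- piece 4
  have hJ4 : (∫ s in v..(1:ℝ), h s) ≤ 2 * a ^ (-α) / (1-β) := by
    have hmono := integral_mono_on hv1.le I4 (hM1 v 1) hP4
    have hval : (∫ s in v..(1:ℝ), (a/2) ^ (-α) * s ^ (-β))
        = (a/2) ^ (-α) * (((1:ℝ) ^ (-β+1) - v ^ (-β+1)) / (-β+1)) := by
      rw [intervalIntegral.integral_const_mul, integral_rpow (Or.inl (by linarith))]
    rw [hval, Real.one_rpow] at hmono
    have hv0' : (0:ℝ) ≤ v ^ (-β+1) := Real.rpow_nonneg (g_nonneg _) _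
    have hfrac : (1 - v ^ (-β+1)) / (-β+1) ≤ 1 / (1-β) := by
      rw [show -β+(1:ℝ) = 1-β by ring] at hv0' ⊢
      gcongr
      linarith
    calc (∫ s in v..(1:ℝ), h s) ≤ (a/2) ^ (-α) * ((1 - v ^ (-β+1)) / (-β+1)) := hmono
      _ ≤ (2 * a ^ (-α)) * (1 / (1-β)) := by
          apply mul_le_mul hA2le hfrac ?_ (by linarith)
          apply div_nonneg ?_ (by linarith)
          have : v ^ (-β+1) ≤ 1 := Real.rpow_le_one (g_nonneg _) hv1.le (by linarith)
          linarith
      _ = 2 * a ^ (-α) / (1-β) := by ring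
  -- pieces 2 and 3
  have hJ2 : (∫ s in u..s₀, h s)
      ≤ (u ^ (-β) * c ^ (-α)) * ((s₀ - u) ^ (-α+1) / (-α+1)) := by
    have hmono := integral_mono_on hus₀ I2 hM2 hP2
    have hval : (∫ s in u..s₀, (u ^ (-β) * c ^ (-α)) * (s₀ - s) ^ (-α))
        = (u ^ (-β) * c ^ (-α)) * ((s₀ - u) ^ (-α+1) / (-α+1)) := by
      rw [intervalIntegral.integral_const_mul, integral_comp_sub_left (fun x : ℝ => x ^ (-α)) s₀, sub_self,
        integral_rpow (Or.inl (by linarith)), Real.zero_rpow (by linarith : -α+1 ≠ 0), sub_zero]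
    rw [hval] at hmono
    exact hmono
  have hJ3 : (∫ s in s₀..v, h s)
      ≤ (u ^ (-β) * c ^ (-α)) * ((v - s₀) ^ (-α+1) / (-α+1)) := by
    have hmono := integral_mono_on hs₀v I3 hM3 hP3
    have hval : (∫ s in s₀..v, (u ^ (-β) * c ^ (-α)) * (s - s₀) ^ (-α))
        = (u ^ (-β) * c ^ (-α)) * ((v - s₀) ^ (-α+1) / (-α+1)) := by
      rw [intervalIntegral.integral_const_mul, integral_comp_sub_right (fun x : ℝ => x ^ (-α)) s₀, sub_self,
        integral_rpow (Or.inl (by linarith)), Real.zero_rpow (by linarith : -α+1 ≠ 0), sub_zero]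
    rw [hval] at hmono
    exact hmono
  have hcα : c ^ (-α) = a ^ (-α) * (2*u) ^ α := by
    rw [hcdef, Real.div_rpow ha.le (by positivity),
      Real.rpow_neg (by positivity : (0:ℝ) ≤ 2*u) α, div_eq_mul_inv, inv_inv]
  have h2uids : (2*u) ^ α * (2*u) ^ (-α+1) = 2*u := by
    rw [← Real.rpow_add (by positivity : (0:ℝ) < 2*u), show α + (-α+1) = (1:ℝ) by ring,
      Real.rpow_one]
  have hupow : u ^ (-β) * u = u ^ (-β+1) := by
    rw [Real.rpow_add hu0, Real.rpow_one]
  have hK0 : (0:ℝ) ≤ u ^ (-β) * c ^ (-α) :=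
    mul_nonneg (Real.rpow_nonneg hu0.le _) (Real.rpow_nonneg hc0.le _)
  have hJ23 : (∫ s in u..s₀, h s) + (∫ s in s₀..v, h s) ≤ 4 * a ^ (-α) / (1-α) := by
    have hs₀u2u : s₀ - u ≤ 2*u := by linarith
    have hvs₀2u : v - s₀ ≤ 2*u := by linarith
    have hb2 : (s₀-u) ^ (-α+1) ≤ (2*u) ^ (-α+1) :=
      Real.rpow_le_rpow (by linarith) hs₀u2u (by linarith)
    have hb3 : (v-s₀) ^ (-α+1) ≤ (2*u) ^ (-α+1) :=
      Real.rpow_le_rpow (by linarith) hvs₀2u (by linarith)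
    have hαpos : (0:ℝ) < -α+1 := by linarith
    have hu1β : u ^ (-β+1) ≤ 1 := Real.rpow_le_one hu0.le hu1.le (by linarith)
    calc (∫ s in u..s₀, h s) + (∫ s in s₀..v, h s)
        ≤ (u ^ (-β) * c ^ (-α)) * ((s₀-u) ^ (-α+1) / (-α+1))
            + (u ^ (-β) * c ^ (-α)) * ((v-s₀) ^ (-α+1) / (-α+1)) := add_le_add hJ2 hJ3
      _ ≤ (u ^ (-β) * c ^ (-α)) * ((2*u) ^ (-α+1) / (-α+1))
            + (u ^ (-β) * c ^ (-α)) * ((2*u) ^ (-α+1) / (-α+1)) := by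
          have l1 : (s₀-u) ^ (-α+1) / (-α+1) ≤ (2*u) ^ (-α+1) / (-α+1) := by gcongr
          have l2 : (v-s₀) ^ (-α+1) / (-α+1) ≤ (2*u) ^ (-α+1) / (-α+1) := by gcongr
          exact add_le_add (mul_le_mul_of_nonneg_left l1 hK0)
            (mul_le_mul_of_nonneg_left l2 hK0)
      _ = 2 * ((u ^ (-β) * (a ^ (-α) * (2*u) ^ α)) * ((2*u) ^ (-α+1) / (-α+1))) := by
          rw [← hcα]; ring
      _ = 2 * (u ^ (-β) * a ^ (-α) * ((2*u) ^ α * (2*u) ^ (-α+1)) / (-α+1)) := by ring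
      _ = 2 * (u ^ (-β) * a ^ (-α) * (2*u) / (-α+1)) := by rw [h2uids]
      _ = 4 * ((u ^ (-β) * u) * a ^ (-α) / (-α+1)) := by ring
      _ = 4 * (u ^ (-β+1) * a ^ (-α) / (-α+1)) := by rw [hupow]
      _ ≤ 4 * (1 * a ^ (-α) / (-α+1)) := by
          gcongr
      _ = 4 * a ^ (-α) / (1-α) := by
          rw [show -α+(1:ℝ) = 1-α by ring]; ring
  rw [hsplit, show (4/(1-β) + 4/(1-α)) * a ^ (-α)
      = 2 * a ^ (-α) / (1-β) + (4 * a ^ (-α) / (1-α)) + 2 * a ^ (-α) / (1-β) from by ring]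
  linarith [hJ1, hJ23, hJ4]

lemma main_neg {α β a : ℝ} (hα0 : 0 < α) (hα1 : α < 1) (hβ0 : 0 ≤ β) (hβ1 : β < 1)
    (ha : a < 0) :
    IntervalIntegrable (fun s : ℝ => s ^ (-β) * |a - f s| ^ (-α)) volume 0 1 ∧
    (∫ s in (0:ℝ)..1, s ^ (-β) * |a - f s| ^ (-α)) ≤ (4/(1-β) + 4/(1-α)) * |a| ^ (-α) := by
  have hαneg : -α ≤ 0 := by linarith
  set h : ℝ → ℝ := fun s => s ^ (-β) * |a - f s| ^ (-α) with hh
  have hP : ∀ s ∈ Icc (0:ℝ) 1, h s ≤ |a| ^ (-α) * s ^ (-β) := by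
    intro s hs
    have hf0 : 0 ≤ f s := f_nonneg (by linarith [hs.1]) hs.2
    have habs : |a| ≤ |a - f s| := by
      rw [abs_of_neg ha, abs_of_neg (by linarith : a - f s < 0)]
      linarith
    have hr := Real.rpow_le_rpow_of_nonpos (abs_pos.mpr (ne_of_lt ha)) habs hαneg
    calc h s = s ^ (-β) * |a - f s| ^ (-α) := rfl
      _ ≤ s ^ (-β) * |a| ^ (-α) := mul_le_mul_of_nonneg_left hr (Real.rpow_nonneg hs.1 _)
      _ = |a| ^ (-α) * s ^ (-β) := mul_comm _ _
  have hm : Measurable h := hmeas α β a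
  have hM : IntervalIntegrable (fun s : ℝ => |a| ^ (-α) * s ^ (-β)) volume 0 1 :=
    (intervalIntegrable_rpow' (by linarith)).const_mul _
  have hnn : ∀ s : ℝ, 0 ≤ s → 0 ≤ h s := fun s hs =>
    mul_nonneg (Real.rpow_nonneg hs _) (Real.rpow_nonneg (abs_nonneg _) _)
  have I : IntervalIntegrable h volume 0 1 :=
    integrable_piece zero_le_one hm hM
      (fun s hs => by rw [abs_of_nonneg (hnn s hs.1)]; exact hP s hs)
  refine ⟨I, ?_⟩
  have hmono := integral_mono_on zero_le_one I hM hP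
  have hval : (∫ s in (0:ℝ)..1, |a| ^ (-α) * s ^ (-β))
      = |a| ^ (-α) * (((1:ℝ) ^ (-β+1) - 0 ^ (-β+1)) / (-β+1)) := by
    rw [intervalIntegral.integral_const_mul, integral_rpow (Or.inl (by linarith))]
  rw [hval, Real.one_rpow, Real.zero_rpow (by linarith : -β+1 ≠ 0), sub_zero] at hmono
  have hXβ : (0:ℝ) ≤ |a| ^ (-α) := Real.rpow_nonneg (abs_nonneg _) _
  have h1β : (0:ℝ) < 1-β := by linarith
  have h1α : (0:ℝ) < 1-α := by linarith
  have hcc : 1/(1-β) ≤ 4/(1-β) + 4/(1-α) := by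
    have h4α : 0 < 4/(1-α) := div_pos (by norm_num) h1α
    have h3β : 0 < 3/(1-β) := div_pos (by norm_num) h1β
    have : (4:ℝ)/(1-β) - 1/(1-β) = 3/(1-β) := by ring
    linarith
  calc (∫ s in (0:ℝ)..1, h s) ≤ |a| ^ (-α) * (1/(-β+1)) := hmono
    _ = |a| ^ (-α) * (1/(1-β)) := by rw [show -β+(1:ℝ) = 1-β by ring]
    _ ≤ |a| ^ (-α) * (4/(1-β) + 4/(1-α)) := mul_le_mul_of_nonneg_left hcc hXβ
    _ = (4/(1-β) + 4/(1-α)) * |a| ^ (-α) := mul_comm _ _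

end Stmt14

open Stmt14 in
/-- For `α ∈ (0,1)`, `β ∈ [0,1)` there is `C > 0` (depending only on
`α, β`) such that for all `a ≠ 0`,
`∫₀¹ s^{−β}|a ± (1/2)log(1 − s²)|^{−α} ds ≤ C|a|^{−α}` (both integrals being finite). -/
theorem stmt_14 (α β : ℝ) (hα : α ∈ Set.Ioo (0 : ℝ) 1) (hβ : β ∈ Set.Ico (0 : ℝ) 1) :
    ∃ C : ℝ, 0 < C ∧ ∀ a : ℝ, a ≠ 0 →
      (IntervalIntegrable
          (fun s : ℝ => s ^ (-β) * |a + (1 / 2) * Real.log (1 - s ^ 2)| ^ (-α)) volume 0 1 ∧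
       (∫ s in (0:ℝ)..1, s ^ (-β) * |a + (1 / 2) * Real.log (1 - s ^ 2)| ^ (-α))
          ≤ C * |a| ^ (-α)) ∧
      (IntervalIntegrable
          (fun s : ℝ => s ^ (-β) * |a - (1 / 2) * Real.log (1 - s ^ 2)| ^ (-α)) volume 0 1 ∧
       (∫ s in (0:ℝ)..1, s ^ (-β) * |a - (1 / 2) * Real.log (1 - s ^ 2)| ^ (-α))
          ≤ C * |a| ^ (-α)) := by
  obtain ⟨hα0, hα1⟩ := hα
  obtain ⟨hβ0, hβ1⟩ := hβ
  have h1β : (0:ℝ) < 1-β := by linarith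
  have h1α : (0:ℝ) < 1-α := by linarith
  refine ⟨4/(1-β) + 4/(1-α), by positivity, fun a ha => ?_⟩
  have key : ∀ b : ℝ, b ≠ 0 →
      IntervalIntegrable (fun s : ℝ => s ^ (-β) * |b - f s| ^ (-α)) volume 0 1 ∧
      (∫ s in (0:ℝ)..1, s ^ (-β) * |b - f s| ^ (-α))
        ≤ (4/(1-β) + 4/(1-α)) * |b| ^ (-α) := by
    intro b hb
    rcases lt_or_gt_of_ne hb with hneg | hpos
    · exact main_neg hα0 hα1 hβ0 hβ1 hneg
    · have := main_pos (a := b) hα0 hα1 hβ0 hβ1 hpos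
      rwa [abs_of_pos hpos]
  have e1 : (fun s : ℝ => s ^ (-β) * |a + (1 / 2) * Real.log (1 - s ^ 2)| ^ (-α))
      = (fun s : ℝ => s ^ (-β) * |a - f s| ^ (-α)) := by
    funext s
    simp only [f, sub_neg_eq_add]
  have e2 : (fun s : ℝ => s ^ (-β) * |a - (1 / 2) * Real.log (1 - s ^ 2)| ^ (-α))
      = (fun s : ℝ => s ^ (-β) * |(-a) - f s| ^ (-α)) := by
    funext s
    simp only [f, sub_neg_eq_add]
    rw [show -a + (1/2) * Real.log (1 - s^2) = -(a - (1/2) * Real.log (1 - s^2)) by ring,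
      abs_neg]
  obtain ⟨ia, ba⟩ := key a ha
  obtain ⟨ina, bna⟩ := key (-a) (neg_ne_zero.mpr ha)
  rw [abs_neg] at bna
  refine ⟨⟨?_, ?_⟩, ⟨?_, ?_⟩⟩
  · rw [e1]; exact ia
  · rw [e1]; exact ba
  · rw [e2]; exact ina
  · rw [e2]; exact bna
end

section
/- Let T > 0 and define u(t,r) = (2/r)·arctan(r/(T − t)) for 0 ≤ t < T and r > 0. Then u satisfies ∂ₜ²u(t,r) − ∂ᵣ²u(t,r) − (4/r)·∂ᵣu(t,r) + ( sin(2r·u(t,r)) − 2r·u(t,r) )/r³ = 0 for all 0 ≤ t < T and r > 0. -/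
open Real

private lemma sin_four_arctan (x : ℝ) :
    Real.sin (4 * Real.arctan x) = 4 * x * (1 - x ^ 2) / (1 + x ^ 2) ^ 2 := by
  have h4 : (4 : ℝ) * Real.arctan x = 2 * (2 * Real.arctan x) := by ring
  rw [h4, Real.sin_two_mul, Real.sin_two_mul, Real.cos_two_mul, Real.sin_arctan,
    Real.cos_arctan]
  have hpos : (0 : ℝ) < 1 + x ^ 2 := by positivity
  have hs : Real.sqrt (1 + x ^ 2) ^ 2 = 1 + x ^ 2 := Real.sq_sqrt hpos.le
  have hs0 : Real.sqrt (1 + x ^ 2) ≠ 0 := by positivity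
  rw [← hs]
  field_simp
  simp only [hs]
  ring

/-- The self-similar solution `u(t,r) = (2/r) arctan(r/(T − t))` satisfies
the radial wave maps equation
`∂ₜ²u − ∂ᵣ²u − (4/r)∂ᵣu + (sin(2ru) − 2ru)/r³ = 0` for `0 ≤ t < T`, `r > 0`. -/
theorem stmt_16 (T : ℝ) (hT : 0 < T) (u : ℝ → ℝ → ℝ)
    (hu : ∀ t r : ℝ, u t r = 2 / r * Real.arctan (r / (T - t))) :
    ∀ t r : ℝ, 0 ≤ t → t < T → 0 < r →
      deriv (fun s : ℝ => deriv (fun s' : ℝ => u s' r) s) t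
        - deriv (fun ρ : ℝ => deriv (fun ρ' : ℝ => u t ρ') ρ) r
        - 4 / r * deriv (fun ρ : ℝ => u t ρ) r
        + (Real.sin (2 * r * u t r) - 2 * r * u t r) / r ^ 3 = 0 := by
  intro t r ht htT hr
  have ha : (0 : ℝ) < T - t := sub_pos.mpr htT
  have ha0 : T - t ≠ 0 := ne_of_gt ha
  have hr0 : r ≠ 0 := ne_of_gt hr
  set a : ℝ := T - t with ha_def
  have hden : a ^ 2 + r ^ 2 ≠ 0 := by positivity
  -- inner r-derivative, valid for all ρ > 0
  have hinner : ∀ ρ : ℝ, 0 < ρ →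
      deriv (fun ρ' : ℝ => u t ρ') ρ
        = -2 / ρ ^ 2 * Real.arctan (ρ / a) + 2 * a / (ρ * (a ^ 2 + ρ ^ 2)) := by
    intro ρ hρ
    have hρ0 : ρ ≠ 0 := ne_of_gt hρ
    have h1 : HasDerivAt (fun ρ' : ℝ => 2 / ρ') (2 * (-(ρ ^ 2)⁻¹)) ρ := by
      simpa [div_eq_mul_inv, mul_comm] using (hasDerivAt_inv hρ0).const_mul 2
    have h2 : HasDerivAt (fun ρ' : ℝ => ρ' / a) (1 / a) ρ := by
      simpa using (hasDerivAt_id ρ).div_const a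
    have h3 : HasDerivAt (fun ρ' : ℝ => Real.arctan (ρ' / a))
        (1 / (1 + (ρ / a) ^ 2) * (1 / a)) ρ :=
      HasDerivAt.comp (h₂ := Real.arctan) ρ (Real.hasDerivAt_arctan (ρ / a)) h2
    have h4 := h1.fun_mul h3
    have h5 : (fun ρ' : ℝ => u t ρ') = fun ρ' : ℝ => 2 / ρ' * Real.arctan (ρ' / a) := by
      funext ρ'; rw [hu]
    rw [h5, h4.deriv]
    have h1p : (0:ℝ) < 1 + (ρ / a) ^ 2 := by positivity
    have hdenρ : a ^ 2 + ρ ^ 2 ≠ 0 := by positivity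
    field_simp
  -- second t-derivative
  have hdt : deriv (fun s : ℝ => deriv (fun s' : ℝ => u s' r) s) t
      = 4 * a / (a ^ 2 + r ^ 2) ^ 2 := by
    have hev : (fun s : ℝ => deriv (fun s' : ℝ => u s' r) s)
        =ᶠ[nhds t] fun s : ℝ => 2 / ((T - s) ^ 2 + r ^ 2) := by
      filter_upwards [Iio_mem_nhds htT] with s hs
      have hb : (0 : ℝ) < T - s := sub_pos.mpr hs
      have hb0 : T - s ≠ 0 := ne_of_gt hb
      have h2 : HasDerivAt (fun s' : ℝ => T - s') (-1) s := by
        simpa using (hasDerivAt_id s).const_sub T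
      have h3 : HasDerivAt (fun s' : ℝ => (T - s')⁻¹) (-(-1) / (T - s) ^ 2) s :=
        h2.inv hb0
      have h4 : HasDerivAt (fun s' : ℝ => r * (T - s')⁻¹)
          (r * (-(-1) / (T - s) ^ 2)) s := h3.const_mul r
      have h5 : HasDerivAt (fun s' : ℝ => Real.arctan (r / (T - s')))
          (1 / (1 + (r / (T - s)) ^ 2) * (r * (-(-1) / (T - s) ^ 2))) s := by
        have := (Real.hasDerivAt_arctan (r / (T - s))).comp s h4
        simpa [div_eq_mul_inv, Function.comp_def] using this
      have h6 := h5.const_mul (2 / r)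
      have h7 : (fun s' : ℝ => u s' r) = fun s' : ℝ => 2 / r * Real.arctan (r / (T - s')) := by
        funext s'; rw [hu]
      rw [h7, h6.deriv]
      have h1p : (0:ℝ) < 1 + (r / (T - s)) ^ 2 := by positivity
      have hdens : (T - s) ^ 2 + r ^ 2 ≠ 0 := by positivity
      field_simp
    rw [hev.deriv_eq]
    have h2 : HasDerivAt (fun s : ℝ => T - s) (-1) t := by
      simpa using (hasDerivAt_id t).const_sub T
    have hden' : HasDerivAt (fun s : ℝ => (T - s) ^ 2 + r ^ 2)
        ((2 : ℕ) * (T - t) ^ (2 - 1) * (-1)) t := (h2.pow 2).add_const (r ^ 2)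
    have h8 : HasDerivAt (fun s : ℝ => 2 / ((T - s) ^ 2 + r ^ 2))
        ((0 * ((T - t) ^ 2 + r ^ 2) - 2 * ((2 : ℕ) * (T - t) ^ (2 - 1) * (-1)))
          / ((T - t) ^ 2 + r ^ 2) ^ 2) t :=
      (hasDerivAt_const t 2).div hden' (by positivity)
    rw [h8.deriv]
    rw [← ha_def]
    field_simp
    ring
  -- second r-derivative
  have hdr2 : deriv (fun ρ : ℝ => deriv (fun ρ' : ℝ => u t ρ') ρ) r
      = 4 / r ^ 3 * Real.arctan (r / a)
        + (-2 / r ^ 2) * (1 / (1 + (r / a) ^ 2) * (1 / a))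
        + (0 * (r * (a ^ 2 + r ^ 2)) - 2 * a * (1 * (a ^ 2 + r ^ 2) + r * (0 + (2 : ℕ) * r ^ 1 * 1)))
          / (r * (a ^ 2 + r ^ 2)) ^ 2 := by
    have hev : (fun ρ : ℝ => deriv (fun ρ' : ℝ => u t ρ') ρ)
        =ᶠ[nhds r] fun ρ : ℝ =>
          -2 / ρ ^ 2 * Real.arctan (ρ / a) + 2 * a / (ρ * (a ^ 2 + ρ ^ 2)) := by
      filter_upwards [Ioi_mem_nhds hr] with ρ hρ
      exact hinner ρ hρ
    rw [hev.deriv_eq]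
    have hsq : HasDerivAt (fun ρ : ℝ => ρ ^ 2) ((2 : ℕ) * r ^ 1 * 1) r := by
      simpa using ((hasDerivAt_id r).fun_pow 2)
    have hA : HasDerivAt (fun ρ : ℝ => -2 / ρ ^ 2)
        (-(-2 * ((2 : ℕ) * r ^ 1 * 1)) / (r ^ 2) ^ 2) r := by
      have := (hasDerivAt_const r (-2 : ℝ)).fun_div hsq (pow_ne_zero 2 hr0)
      refine this.congr_deriv ?_
      ring
    have h2 : HasDerivAt (fun ρ : ℝ => ρ / a) (1 / a) r := by
      simpa using (hasDerivAt_id r).div_const a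
    have h3 : HasDerivAt (fun ρ : ℝ => Real.arctan (ρ / a))
        (1 / (1 + (r / a) ^ 2) * (1 / a)) r :=
      HasDerivAt.comp (h₂ := Real.arctan) r (Real.hasDerivAt_arctan (r / a)) h2
    have hT1 := hA.fun_mul h3
    have hden2 : HasDerivAt (fun ρ : ℝ => ρ * (a ^ 2 + ρ ^ 2))
        (1 * (a ^ 2 + r ^ 2) + r * (0 + (2 : ℕ) * r ^ 1 * 1)) r :=
      (hasDerivAt_id r).mul ((hasDerivAt_const r (a ^ 2)).add hsq)
    have hT2 : HasDerivAt (fun ρ : ℝ => 2 * a / (ρ * (a ^ 2 + ρ ^ 2)))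
        ((0 * (r * (a ^ 2 + r ^ 2)) - 2 * a * (1 * (a ^ 2 + r ^ 2) + r * (0 + (2 : ℕ) * r ^ 1 * 1)))
          / (r * (a ^ 2 + r ^ 2)) ^ 2) r :=
      (hasDerivAt_const r (2 * a)).div hden2 (by positivity)
    rw [(hT1.fun_add hT2).deriv]
    have h1p : (0:ℝ) < 1 + (r / a) ^ 2 := by positivity
    field_simp
    ring
  -- assemble
  rw [hdt, hdr2, hinner r hr, hu t r]
  have h2ru : 2 * r * (2 / r * Real.arctan (r / a)) = 4 * Real.arctan (r / a) := by
    field_simp; ring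
  rw [h2ru, sin_four_arctan]
  have h1p : (0:ℝ) < 1 + (r / a) ^ 2 := by positivity
  field_simp
  ring
end

section
/- Let d ≥ 3 be an integer and T > 0, and define f(t,r) = 2·arctan( r/( sqrt(d − 2)·(T − t) ) ) for 0 ≤ t < T and r > 0. Then f satisfies ∂ₜ²f(t,r) − ∂ᵣ²f(t,r) − ((d − 1)/r)·∂ᵣf(t,r) + ((d − 1)/(2r²))·sin(2f(t,r)) = 0 for all 0 ≤ t < T and r > 0. -/
/-- For `d ≥ 3` and `T > 0`, the self-similar profile
`f(t,r) = 2 arctan(r/(√(d−2)(T − t)))` satisfies the corotational wave maps equation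
`∂ₜ²f − ∂ᵣ²f − ((d−1)/r)∂ᵣf + ((d−1)/(2r²)) sin(2f) = 0` for `0 ≤ t < T`, `r > 0`. -/
theorem stmt_17 (d : ℕ) (hd : 3 ≤ d) (T : ℝ) (hT : 0 < T) (f : ℝ → ℝ → ℝ)
    (hf : ∀ t r : ℝ, f t r = 2 * Real.arctan (r / (Real.sqrt ((d : ℝ) - 2) * (T - t)))) :
    ∀ t r : ℝ, 0 ≤ t → t < T → 0 < r →
      deriv (fun s : ℝ => deriv (fun s' : ℝ => f s' r) s) t
        - deriv (fun ρ : ℝ => deriv (fun ρ' : ℝ => f t ρ') ρ) r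
        - ((d : ℝ) - 1) / r * deriv (fun ρ : ℝ => f t ρ) r
        + ((d : ℝ) - 1) / (2 * r ^ 2) * Real.sin (2 * f t r) = 0 := by
  intro t r ht htT hr
  have hd3 : (3:ℝ) ≤ (d:ℝ) := by exact_mod_cast hd
  set c : ℝ := Real.sqrt ((d:ℝ) - 2) with hc_def
  have hc2 : c ^ 2 = (d:ℝ) - 2 := Real.sq_sqrt (by linarith)
  have hcpos : 0 < c := Real.sqrt_pos.mpr (by linarith)
  set a : ℝ := c * (T - t) with ha_def
  have hapos : 0 < a := mul_pos hcpos (by linarith)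
  have hden : (0:ℝ) < a ^ 2 + r ^ 2 := by positivity
  -- first derivative in t
  have L1 : ∀ s : ℝ, s < T →
      HasDerivAt (fun s' => f s' r) (2 * r * c / (c ^ 2 * (T - s) ^ 2 + r ^ 2)) s := by
    intro s hs
    have hne : c * (T - s) ≠ 0 := (mul_pos hcpos (by linarith)).ne'
    have h1 : HasDerivAt (fun s' : ℝ => c * (T - s')) (c * (-1)) s :=
      ((hasDerivAt_id s).const_sub T).const_mul c
    have h2 : HasDerivAt (fun s' : ℝ => (c * (T - s'))⁻¹)
        (-(c * (-1)) / (c * (T - s)) ^ 2) s := h1.inv hne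
    have h3 := h2.const_mul r
    have h4 := h3.arctan
    have h5 := h4.const_mul 2
    have hfun : (fun s' => f s' r)
        = fun s' => 2 * Real.arctan (r * (c * (T - s'))⁻¹) := by
      funext s'; rw [hf, div_eq_mul_inv]
    rw [hfun]
    refine h5.congr_deriv ?_
    have hpos2 : (0:ℝ) < c ^ 2 * (T - s) ^ 2 + r ^ 2 := by positivity
    have hTs : T - s ≠ 0 := sub_ne_zero.mpr hs.ne'
    field_simp
  -- second derivative in t
  have L2 : HasDerivAt (fun s : ℝ => 2 * r * c / (c ^ 2 * (T - s) ^ 2 + r ^ 2))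
      (4 * r * ((d:ℝ) - 2) * a / (a ^ 2 + r ^ 2) ^ 2) t := by
    have h1 : HasDerivAt (fun s : ℝ => (T - s) ^ 2)
        ((2:ℕ) * (T - t) ^ 1 * (-1)) t := ((hasDerivAt_id t).const_sub T).pow 2
    have h2 := (h1.const_mul (c ^ 2)).add_const (r ^ 2)
    have hdne : c ^ 2 * (T - t) ^ 2 + r ^ 2 ≠ 0 := by positivity
    have h3 := (h2.inv hdne).const_mul (2 * r * c)
    have hfun : (fun s : ℝ => 2 * r * c / (c ^ 2 * (T - s) ^ 2 + r ^ 2))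
        = fun s : ℝ => 2 * r * c * (c ^ 2 * (T - s) ^ 2 + r ^ 2)⁻¹ := by
      funext s; rw [div_eq_mul_inv]
    rw [hfun]
    refine h3.congr_deriv ?_
    rw [← hc2, ha_def]
    push_cast
    field_simp
    ring
  -- first derivative in r
  have L3 : ∀ ρ : ℝ, HasDerivAt (fun ρ' => f t ρ') (2 * a / (a ^ 2 + ρ ^ 2)) ρ := by
    intro ρ
    have hane : a ≠ 0 := hapos.ne'
    have h1 : HasDerivAt (fun ρ' : ℝ => ρ' * a⁻¹) a⁻¹ ρ := by
      simpa using (hasDerivAt_id ρ).mul_const a⁻¹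
    have h2 := h1.arctan.const_mul 2
    have hfun : (fun ρ' => f t ρ') = fun ρ' => 2 * Real.arctan (ρ' * a⁻¹) := by
      funext ρ'; rw [hf, ← ha_def, div_eq_mul_inv]
    rw [hfun]
    refine h2.congr_deriv ?_
    have hpos2 : (0:ℝ) < a ^ 2 + ρ ^ 2 := by positivity
    field_simp
  -- second derivative in r
  have L4 : HasDerivAt (fun ρ : ℝ => 2 * a / (a ^ 2 + ρ ^ 2))
      (-(4 * a * r) / (a ^ 2 + r ^ 2) ^ 2) r := by
    have h1 : HasDerivAt (fun ρ : ℝ => a ^ 2 + ρ ^ 2)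
        (0 + (2:ℕ) * r ^ 1 * 1) r := (hasDerivAt_const r (a ^ 2)).add ((hasDerivAt_id r).pow 2)
    have h2 := (h1.inv hden.ne').const_mul (2 * a)
    have hfun : (fun ρ : ℝ => 2 * a / (a ^ 2 + ρ ^ 2))
        = fun ρ : ℝ => 2 * a * (a ^ 2 + ρ ^ 2)⁻¹ := by
      funext ρ; rw [div_eq_mul_inv]
    rw [hfun]
    refine h2.congr_deriv ?_
    push_cast
    field_simp
    ring
  -- sine identity
  have L5 : Real.sin (2 * f t r)
      = 4 * r * a * (a ^ 2 - r ^ 2) / (a ^ 2 + r ^ 2) ^ 2 := by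
    have hane : a ≠ 0 := hapos.ne'
    set u : ℝ := r / a with hu
    have hfr : f t r = 2 * Real.arctan u := by rw [hf, ← ha_def, ← hu]
    have h1u : (0:ℝ) < 1 + u ^ 2 := by positivity
    have hs : Real.sqrt (1 + u ^ 2) * Real.sqrt (1 + u ^ 2) = 1 + u ^ 2 :=
      Real.mul_self_sqrt h1u.le
    have hsne : Real.sqrt (1 + u ^ 2) ≠ 0 := by positivity
    have hsin2 : Real.sin (2 * Real.arctan u) = 2 * u / (1 + u ^ 2) := by
      rw [Real.sin_two_mul, Real.sin_arctan, Real.cos_arctan]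
      field_simp
      rw [Real.sq_sqrt h1u.le]
    have hcos2 : Real.cos (2 * Real.arctan u) = (1 - u ^ 2) / (1 + u ^ 2) := by
      rw [Real.cos_two_mul, Real.cos_arctan]
      field_simp
      nlinarith [hs]
    have : Real.sin (2 * f t r) = 2 * Real.sin (2 * Real.arctan u) * Real.cos (2 * Real.arctan u) := by
      rw [hfr]
      rw [show (2:ℝ) * (2 * Real.arctan u) = 2 * (2 * Real.arctan u) by ring]
      exact Real.sin_two_mul _
    rw [this, hsin2, hcos2, hu]
    field_simp
    ring
  -- assemble
  have E1 : deriv (fun s : ℝ => deriv (fun s' : ℝ => f s' r) s) t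
      = 4 * r * ((d:ℝ) - 2) * a / (a ^ 2 + r ^ 2) ^ 2 := by
    have hev : (fun s : ℝ => deriv (fun s' : ℝ => f s' r) s)
        =ᶠ[nhds t] fun s => 2 * r * c / (c ^ 2 * (T - s) ^ 2 + r ^ 2) := by
      filter_upwards [Iio_mem_nhds htT] with s hs
      exact (L1 s hs).deriv
    rw [hev.deriv_eq, L2.deriv]
  have E2 : deriv (fun ρ : ℝ => deriv (fun ρ' : ℝ => f t ρ') ρ) r
      = -(4 * a * r) / (a ^ 2 + r ^ 2) ^ 2 := by
    have hfun : (fun ρ : ℝ => deriv (fun ρ' : ℝ => f t ρ') ρ)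
        = fun ρ : ℝ => 2 * a / (a ^ 2 + ρ ^ 2) := funext fun ρ => (L3 ρ).deriv
    rw [hfun, L4.deriv]
  have E3 : deriv (fun ρ : ℝ => f t ρ) r = 2 * a / (a ^ 2 + r ^ 2) := (L3 r).deriv
  rw [E1, E2, E3, L5]
  field_simp
  ring
end

section
/- Let λ ∈ ℂ. For ρ ∈ (0,1) define w₁(ρ) = (1 − ρ²)^{1/2}·exp( ((1 − λ)/2)·log((1 − ρ)/(1 + ρ)) ) and w₂(ρ) = (1 − ρ²)^{1/2}·exp( ((1 − λ)/2)·log((1 + ρ)/(1 − ρ)) ), where log is the real natural logarithm of the positive real base. Then both w₁ and w₂ satisfy w''(ρ) + ((2λ − λ²)/(1 − ρ²)²)·w(ρ) = 0 for all ρ ∈ (0,1), and their Wronskian satisfies w₁(ρ)·w₂'(ρ) − w₁'(ρ)·w₂(ρ) = 2·(1 − λ) for all ρ ∈ (0,1). -/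
open Set

noncomputable def fab (a b : ℂ) (x : ℝ) : ℂ :=
  Complex.exp (a * (Real.log (1 - x) : ℂ) + b * (Real.log (1 + x) : ℂ))

noncomputable def gab (a b : ℂ) (x : ℝ) : ℂ := -a / (1 - (x : ℂ)) + b / (1 + (x : ℂ))

lemma hasDerivAt_fab (a b : ℂ) {x : ℝ} (h0 : 0 < 1 - x) (h1 : 0 < 1 + x) :
    HasDerivAt (fab a b) (fab a b x * gab a b x) x := by
  have hm : HasDerivAt (fun y : ℝ => 1 - y) (-1) x := by
    simpa using (hasDerivAt_id x).const_sub 1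
  have hp : HasDerivAt (fun y : ℝ => 1 + y) 1 x := by
    simpa using (hasDerivAt_id x).const_add 1
  have hlm : HasDerivAt (fun y : ℝ => Real.log (1 - y)) ((1 - x)⁻¹ * (-1)) x :=
    (Real.hasDerivAt_log h0.ne').comp x hm
  have hlp : HasDerivAt (fun y : ℝ => Real.log (1 + y)) ((1 + x)⁻¹ * 1) x :=
    (Real.hasDerivAt_log h1.ne').comp x hp
  have h := ((hlm.ofReal_comp.const_mul a).add (hlp.ofReal_comp.const_mul b)).cexp
  have hc0 : (1 : ℂ) - (x : ℂ) ≠ 0 := by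
    rw [show (1 : ℂ) - (x : ℂ) = ((1 - x : ℝ) : ℂ) by push_cast; ring]
    exact_mod_cast h0.ne'
  have hc1 : (1 : ℂ) + (x : ℂ) ≠ 0 := by
    rw [show (1 : ℂ) + (x : ℂ) = ((1 + x : ℝ) : ℂ) by push_cast; ring]
    exact_mod_cast h1.ne'
  convert h using 1
  · rfl
  unfold fab gab
  simp only [Pi.add_apply]
  push_cast
  field_simp

lemma hasDerivAt_gab (a b : ℂ) {x : ℝ} (h0 : 0 < 1 - x) (h1 : 0 < 1 + x) :
    HasDerivAt (gab a b) (-a / (1 - (x : ℂ)) ^ 2 - b / (1 + (x : ℂ)) ^ 2) x := by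
  have hc0 : (1 : ℂ) - (x : ℂ) ≠ 0 := by
    rw [show (1 : ℂ) - (x : ℂ) = ((1 - x : ℝ) : ℂ) by push_cast; ring]
    exact_mod_cast h0.ne'
  have hc1 : (1 : ℂ) + (x : ℂ) ≠ 0 := by
    rw [show (1 : ℂ) + (x : ℂ) = ((1 + x : ℝ) : ℂ) by push_cast; ring]
    exact_mod_cast h1.ne'
  have hid : HasDerivAt (fun y : ℝ => ((y : ℝ) : ℂ)) 1 x := by
    simpa using (hasDerivAt_id x).ofReal_comp
  have hm : HasDerivAt (fun y : ℝ => (1 : ℂ) - (y : ℂ)) (-1) x := by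
    simpa using hid.const_sub 1
  have hp : HasDerivAt (fun y : ℝ => (1 : ℂ) + (y : ℂ)) 1 x := by
    simpa using hid.const_add 1
  have hdm := (hasDerivAt_const x (-a)).div hm hc0
  have hdp := (hasDerivAt_const x b).div hp hc1
  have h := hdm.add hdp
  convert h using 1
  · rfl
  · rfl
  field_simp
  ring

lemma gab_def (a b : ℂ) (x : ℝ) : gab a b x = -a / (1 - (x : ℂ)) + b / (1 + (x : ℂ)) := rfl

lemma derivs_of_eq (a b : ℂ) (w : ℝ → ℂ) (hw : ∀ x ∈ Ioo (-1 : ℝ) 1, w x = fab a b x)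
    {ρ : ℝ} (hρ : ρ ∈ Ioo (-1 : ℝ) 1) :
    deriv w ρ = fab a b ρ * gab a b ρ ∧
    deriv (deriv w) ρ = (fab a b ρ * gab a b ρ) * gab a b ρ +
      fab a b ρ * (-a / (1 - (ρ : ℂ)) ^ 2 - b / (1 + (ρ : ℂ)) ^ 2) := by
  have hopen : IsOpen (Ioo (-1 : ℝ) 1) := isOpen_Ioo
  have hder : ∀ x ∈ Ioo (-1 : ℝ) 1, deriv w x = fab a b x * gab a b x := by
    intro x hx
    have h0 : 0 < 1 - x := by linarith [hx.2]
    have h1 : 0 < 1 + x := by linarith [hx.1]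
    have hmemx : Ioo (-1 : ℝ) 1 ∈ nhds x := hopen.mem_nhds hx
    have heq : w =ᶠ[nhds x] fab a b := Filter.eventually_of_mem hmemx hw
    rw [heq.deriv_eq, (hasDerivAt_fab a b h0 h1).deriv]
  refine ⟨hder ρ hρ, ?_⟩
  have hmem : Ioo (-1 : ℝ) 1 ∈ nhds ρ := hopen.mem_nhds hρ
  have heq : deriv w =ᶠ[nhds ρ] fun x => fab a b x * gab a b x :=
    Filter.eventually_of_mem hmem hder
  rw [heq.deriv_eq]
  have h0 : 0 < 1 - ρ := by linarith [hρ.2]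
  have h1 : 0 < 1 + ρ := by linarith [hρ.1]
  exact ((hasDerivAt_fab a b h0 h1).mul (hasDerivAt_gab a b h0 h1)).deriv

lemma sqrt_exp_eq (mu : ℂ) {x : ℝ} (h0 : 0 < 1 - x) (h1 : 0 < 1 + x) :
    (Real.sqrt (1 - x ^ 2) : ℂ) * Complex.exp (mu * (Real.log ((1 - x) / (1 + x)) : ℂ)) =
      fab (1 / 2 + mu) (1 / 2 - mu) x := by
  have hs : (1 : ℝ) - x ^ 2 = (1 - x) * (1 + x) := by ring
  have hpos : (0 : ℝ) < (1 - x) * (1 + x) := mul_pos h0 h1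
  have hsqrt : Real.sqrt (1 - x ^ 2) =
      Real.exp ((Real.log (1 - x) + Real.log (1 + x)) / 2) := by
    rw [hs, ← Real.log_mul h0.ne' h1.ne']
    rw [← Real.log_sqrt hpos.le, Real.exp_log (Real.sqrt_pos.mpr hpos)]
  rw [hsqrt, Real.log_div h0.ne' h1.ne', Complex.ofReal_exp, ← Complex.exp_add]
  unfold fab
  congr 1
  push_cast
  ring

lemma sqrt_exp_eq' (mu : ℂ) {x : ℝ} (h0 : 0 < 1 - x) (h1 : 0 < 1 + x) :
    (Real.sqrt (1 - x ^ 2) : ℂ) * Complex.exp (mu * (Real.log ((1 + x) / (1 - x)) : ℂ)) =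
      fab (1 / 2 - mu) (1 / 2 + mu) x := by
  have hs : (1 : ℝ) - x ^ 2 = (1 - x) * (1 + x) := by ring
  have hpos : (0 : ℝ) < (1 - x) * (1 + x) := mul_pos h0 h1
  have hsqrt : Real.sqrt (1 - x ^ 2) =
      Real.exp ((Real.log (1 - x) + Real.log (1 + x)) / 2) := by
    rw [hs, ← Real.log_mul h0.ne' h1.ne']
    rw [← Real.log_sqrt hpos.le, Real.exp_log (Real.sqrt_pos.mpr hpos)]
  rw [hsqrt, Real.log_div h1.ne' h0.ne', Complex.ofReal_exp, ← Complex.exp_add]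
  unfold fab
  congr 1
  push_cast
  ring

lemma bracket (lam u v : ℂ) (hu : u ≠ 0) (hv : v ≠ 0) (huv : u + v = 2) :
    (-(1 / 2 + (1 - lam) / 2) / u + (1 / 2 - (1 - lam) / 2) / v) *
        (-(1 / 2 + (1 - lam) / 2) / u + (1 / 2 - (1 - lam) / 2) / v) +
      (-(1 / 2 + (1 - lam) / 2) / u ^ 2 - (1 / 2 - (1 - lam) / 2) / v ^ 2) +
      (2 * lam - lam ^ 2) / (u * v) ^ 2 = 0 := by
  have hiu : u * u⁻¹ = 1 := mul_inv_cancel₀ hu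
  have hiv : v * v⁻¹ = 1 := mul_inv_cancel₀ hv
  linear_combination (-((1 / 2 + (1 - lam) / 2) * (1 / 2 - (1 - lam) / 2)) *
      (u⁻¹ + v⁻¹ + 2 * (u⁻¹ * v⁻¹))) *
      ((-v⁻¹) * hiu + (-u⁻¹) * hiv + (u⁻¹ * v⁻¹) * huv)

lemma bracket' (lam u v : ℂ) (hu : u ≠ 0) (hv : v ≠ 0) (huv : u + v = 2) :
    (-(1 / 2 - (1 - lam) / 2) / u + (1 / 2 + (1 - lam) / 2) / v) *
        (-(1 / 2 - (1 - lam) / 2) / u + (1 / 2 + (1 - lam) / 2) / v) +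
      (-(1 / 2 - (1 - lam) / 2) / u ^ 2 - (1 / 2 + (1 - lam) / 2) / v ^ 2) +
      (2 * lam - lam ^ 2) / (u * v) ^ 2 = 0 := by
  have hiu : u * u⁻¹ = 1 := mul_inv_cancel₀ hu
  have hiv : v * v⁻¹ = 1 := mul_inv_cancel₀ hv
  linear_combination (-((1 / 2 + (1 - lam) / 2) * (1 / 2 - (1 - lam) / 2)) *
      (u⁻¹ + v⁻¹ + 2 * (u⁻¹ * v⁻¹))) *
      ((-v⁻¹) * hiu + (-u⁻¹) * hiv + (u⁻¹ * v⁻¹) * huv)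

lemma bracketW (lam u v : ℂ) (hu : u ≠ 0) (hv : v ≠ 0) (huv : u + v = 2) :
    u * v * ((-(1 / 2 - (1 - lam) / 2) / u + (1 / 2 + (1 - lam) / 2) / v) -
      (-(1 / 2 + (1 - lam) / 2) / u + (1 / 2 - (1 - lam) / 2) / v)) = 2 * (1 - lam) := by
  have hiu : u * u⁻¹ = 1 := mul_inv_cancel₀ hu
  have hiv : v * v⁻¹ = 1 := mul_inv_cancel₀ hv
  linear_combination ((1 - lam) * v) * hiu + ((1 - lam) * u) * hiv + (1 - lam) * huv

/-- For `λ ∈ ℂ`, the functions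
`w₁(ρ) = √(1−ρ²) ((1−ρ)/(1+ρ))^{(1−λ)/2}` and `w₂(ρ) = √(1−ρ²) ((1+ρ)/(1−ρ))^{(1−λ)/2}`
(powers via the real logarithm) solve `w'' + ((2λ − λ²)/(1−ρ²)²)w = 0` on `(0,1)`, with
Wronskian `w₁w₂' − w₁'w₂ = 2(1 − λ)`. -/
theorem stmt_18 (lam : ℂ) (w₁ w₂ : ℝ → ℂ)
    (hw₁ : ∀ ρ : ℝ, w₁ ρ = (Real.sqrt (1 - ρ ^ 2) : ℂ) *
        Complex.exp (((1 - lam) / 2) * (Real.log ((1 - ρ) / (1 + ρ)) : ℂ)))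
    (hw₂ : ∀ ρ : ℝ, w₂ ρ = (Real.sqrt (1 - ρ ^ 2) : ℂ) *
        Complex.exp (((1 - lam) / 2) * (Real.log ((1 + ρ) / (1 - ρ)) : ℂ))) :
    ∀ ρ ∈ Ioo (0:ℝ) 1,
      (deriv (deriv w₁) ρ + ((2 * lam - lam ^ 2) / (1 - (ρ : ℂ) ^ 2) ^ 2) * w₁ ρ = 0) ∧
      (deriv (deriv w₂) ρ + ((2 * lam - lam ^ 2) / (1 - (ρ : ℂ) ^ 2) ^ 2) * w₂ ρ = 0) ∧
      w₁ ρ * deriv w₂ ρ - deriv w₁ ρ * w₂ ρ = 2 * (1 - lam) := by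
  intro ρ hρ
  have h0 : 0 < 1 - ρ := by linarith [hρ.2]
  have h1 : 0 < 1 + ρ := by linarith [hρ.1]
  have hρ' : ρ ∈ Ioo (-1 : ℝ) 1 := ⟨by linarith [hρ.1], hρ.2⟩
  have hw₁' : ∀ x ∈ Ioo (-1 : ℝ) 1,
      w₁ x = fab (1 / 2 + (1 - lam) / 2) (1 / 2 - (1 - lam) / 2) x := by
    intro x hx
    have h0x : 0 < 1 - x := by linarith [hx.2]
    have h1x : 0 < 1 + x := by linarith [hx.1]
    rw [hw₁ x, sqrt_exp_eq ((1 - lam) / 2) h0x h1x]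
  have hw₂' : ∀ x ∈ Ioo (-1 : ℝ) 1,
      w₂ x = fab (1 / 2 - (1 - lam) / 2) (1 / 2 + (1 - lam) / 2) x := by
    intro x hx
    have h0x : 0 < 1 - x := by linarith [hx.2]
    have h1x : 0 < 1 + x := by linarith [hx.1]
    rw [hw₂ x, sqrt_exp_eq' ((1 - lam) / 2) h0x h1x]
  obtain ⟨hd₁, hdd₁⟩ := derivs_of_eq _ _ w₁ hw₁' hρ'
  obtain ⟨hd₂, hdd₂⟩ := derivs_of_eq _ _ w₂ hw₂' hρ'
  have hc0 : (1 : ℂ) - (ρ : ℂ) ≠ 0 := by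
    rw [show (1 : ℂ) - (ρ : ℂ) = ((1 - ρ : ℝ) : ℂ) by push_cast; ring]
    exact_mod_cast h0.ne'
  have hc1 : (1 : ℂ) + (ρ : ℂ) ≠ 0 := by
    rw [show (1 : ℂ) + (ρ : ℂ) = ((1 + ρ : ℝ) : ℂ) by push_cast; ring]
    exact_mod_cast h1.ne'
  have huv : ((1 : ℂ) - (ρ : ℂ)) + ((1 : ℂ) + (ρ : ℂ)) = 2 := by ring
  have hfac : (1 : ℂ) - (ρ : ℂ) ^ 2 = (1 - (ρ : ℂ)) * (1 + (ρ : ℂ)) := by ring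
  have hf12 : fab (1 / 2 + (1 - lam) / 2) (1 / 2 - (1 - lam) / 2) ρ *
      fab (1 / 2 - (1 - lam) / 2) (1 / 2 + (1 - lam) / 2) ρ =
      (1 - (ρ : ℂ)) * (1 + (ρ : ℂ)) := by
    unfold fab
    rw [← Complex.exp_add]
    have hexp : (1 / 2 + (1 - lam) / 2) * (Real.log (1 - ρ) : ℂ) +
        (1 / 2 - (1 - lam) / 2) * (Real.log (1 + ρ) : ℂ) +
        ((1 / 2 - (1 - lam) / 2) * (Real.log (1 - ρ) : ℂ) +
          (1 / 2 + (1 - lam) / 2) * (Real.log (1 + ρ) : ℂ)) =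
        (Real.log (1 - ρ) : ℂ) + (Real.log (1 + ρ) : ℂ) := by ring
    rw [hexp, Complex.exp_add, ← Complex.ofReal_exp, ← Complex.ofReal_exp,
      Real.exp_log h0, Real.exp_log h1]
    push_cast
    ring
  refine ⟨?_, ?_, ?_⟩
  · rw [hdd₁, hw₁' ρ hρ', hfac, gab_def]
    have h := bracket lam (1 - (ρ : ℂ)) (1 + (ρ : ℂ)) hc0 hc1 huv
    linear_combination fab (1 / 2 + (1 - lam) / 2) (1 / 2 - (1 - lam) / 2) ρ * h
  · rw [hdd₂, hw₂' ρ hρ', hfac, gab_def]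
    have h := bracket' lam (1 - (ρ : ℂ)) (1 + (ρ : ℂ)) hc0 hc1 huv
    linear_combination fab (1 / 2 - (1 - lam) / 2) (1 / 2 + (1 - lam) / 2) ρ * h
  · rw [hd₁, hd₂, hw₁' ρ hρ', hw₂' ρ hρ', gab_def, gab_def]
    have h := bracketW lam (1 - (ρ : ℂ)) (1 + (ρ : ℂ)) hc0 hc1 huv
    linear_combination (-(1 / 2 - (1 - lam) / 2) / (1 - (ρ : ℂ)) +
        (1 / 2 + (1 - lam) / 2) / (1 + (ρ : ℂ)) -
        (-(1 / 2 + (1 - lam) / 2) / (1 - (ρ : ℂ)) +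
          (1 / 2 - (1 - lam) / 2) / (1 + (ρ : ℂ)))) * hf12 + h
end
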